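/- arXiv:1909.11300 — 3 statements merged into one kernel-verified Lean document; each statement's English description precedes it below -/
import Mathlib

section
/- Let 0 < p ≤ 1 and let H be a complex Hilbert space. For A ∈ B(H)⁺ one has A = 0 if and only if for all X, Y ∈ B(H)⁺ the equality A = X 𝔪ₚ Y implies X = A and Y = A. -/
open scoped NNReal

set_option synthInstance.maxHeartbeats 1000000
set_option maxHeartbeats 4000000

variable {H : Type*} [NormedAddCommGroup H] [InnerProductSpace ℂ H] [CompleteSpace H]

/-- `m` is the Kubo–Ando `p`-th power mean on positive operators: it is given by
`A 𝔪ₚ B = A^(1/2) ((1 + (A^(-1/2) B A^(-1/2))^p)/2)^(1/p) A^(1/2)` on invertible positive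
operators, and is determined on all positive operators by the strong limit
`(A 𝔪ₚ B) x = lim_{ε→0⁺} ((A + εI) 𝔪ₚ (B + εI)) x`. -/
def IsKuboAndoPowerMean (p : ℝ) (m : (H →L[ℂ] H) → (H →L[ℂ] H) → (H →L[ℂ] H)) : Prop :=
  (∀ A B : H →L[ℂ] H, 0 ≤ A → 0 ≤ B → IsUnit A → IsUnit B →
      m A B = A ^ ((2 : ℝ)⁻¹) *
        ((2 : ℝ)⁻¹ • (1 + (A ^ (-(2 : ℝ)⁻¹) * B * A ^ (-(2 : ℝ)⁻¹)) ^ p)) ^ p⁻¹ *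
        A ^ ((2 : ℝ)⁻¹)) ∧
  (∀ A B : H →L[ℂ] H, 0 ≤ A → 0 ≤ B → ∀ x : H,
      Filter.Tendsto (fun ε : ℝ => (m (A + ε • 1) (B + ε • 1)) x)
        (nhdsWithin 0 (Set.Ioi 0)) (nhds ((m A B) x)))

namespace KuboAndoAux

/-! ### Scalar inequalities -/

lemma chord {q : ℝ} (hq : 1 ≤ q) {v : ℝ} (hv0 : 0 ≤ v) (hv1 : v ≤ 1) :
    (1 + v) ^ q ≤ 1 + 2 ^ q * v := by
  have hcvx := convexOn_rpow hq
  have h := hcvx.2 (Set.mem_Ici.mpr (by norm_num : (0:ℝ) ≤ 1))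
    (Set.mem_Ici.mpr (by norm_num : (0:ℝ) ≤ 2)) (by linarith : 0 ≤ 1 - v) hv0 (by ring)
  simp only [smul_eq_mul] at h
  have h1 : (1 - v) * 1 + v * 2 = 1 + v := by ring
  rw [h1] at h
  have h2 : (1:ℝ) ^ q = 1 := Real.one_rpow q
  calc (1 + v) ^ q ≤ (1 - v) * 1 ^ q + v * 2 ^ q := h
    _ = 1 - v + v * 2 ^ q := by rw [h2]; ring
    _ ≤ 1 + 2 ^ q * v := by nlinarith

lemma scalar_hi {p : ℝ} (hp0 : 0 < p) (hp1 : p ≤ 1) {s e K : ℝ≥0}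
    (he : 0 < e) (hes : e ≤ s) (hsK : s ≤ K) :
    (s ^ p + e ^ p) ^ (p⁻¹ : ℝ) ≤ s + (2:ℝ≥0) ^ (p⁻¹:ℝ) * K ^ ((1:ℝ) - p) * e ^ p := by
  have hs : 0 < s := he.trans_le hes
  have hq : 1 ≤ p⁻¹ := (one_le_inv₀ hp0).mpr hp1
  set v : ℝ≥0 := (e / s) ^ p with hv
  have hv1 : v ≤ 1 := by
    rw [hv, ← NNReal.one_rpow p]
    exact NNReal.rpow_le_rpow (div_le_one_of_le₀ hes (zero_le (a := s))) hp0.le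
  have hsplit : s ^ p + e ^ p = s ^ p * (1 + v) := by
    rw [mul_add, mul_one, hv, NNReal.div_rpow, mul_div_assoc']
    rw [mul_comm, mul_div_assoc, div_self (NNReal.rpow_pos hs).ne', mul_one]
  have hmain : ((s ^ p + e ^ p) ^ (p⁻¹:ℝ) : ℝ≥0) ≤ s * (1 + (2:ℝ≥0) ^ (p⁻¹:ℝ) * v) := by
    rw [hsplit, NNReal.mul_rpow, ← NNReal.rpow_mul, mul_inv_cancel₀ hp0.ne', NNReal.rpow_one]
    refine mul_le_mul_right ?_ s
    rw [← NNReal.coe_le_coe]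
    push_cast [NNReal.coe_rpow]
    exact chord hq v.coe_nonneg (by exact_mod_cast hv1)
  refine hmain.trans ?_
  rw [mul_add, mul_one]
  refine add_le_add_right ?_ s
  have hsv : s * v = s ^ ((1:ℝ) - p) * e ^ p := by
    rw [hv, NNReal.div_rpow, mul_div_assoc']
    rw [NNReal.rpow_sub hs.ne', NNReal.rpow_one, div_mul_eq_mul_div, mul_comm,
      mul_div_assoc, mul_comm]
  calc s * ((2:ℝ≥0) ^ (p⁻¹:ℝ) * v) = (2:ℝ≥0) ^ (p⁻¹:ℝ) * (s * v) := by ring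
    _ = (2:ℝ≥0) ^ (p⁻¹:ℝ) * (s ^ ((1:ℝ) - p) * e ^ p) := by rw [hsv]
    _ ≤ (2:ℝ≥0) ^ (p⁻¹:ℝ) * (K ^ ((1:ℝ) - p) * e ^ p) := by
        refine mul_le_mul_right (mul_le_mul_left ?_ _) _
        exact NNReal.rpow_le_rpow hsK (by linarith)
    _ = (2:ℝ≥0) ^ (p⁻¹:ℝ) * K ^ ((1:ℝ) - p) * e ^ p := by rw [mul_assoc]

lemma scalar_lo {p : ℝ} (hp0 : 0 < p) {s e : ℝ≥0} :
    s - e ≤ (s ^ p + e ^ p) ^ (p⁻¹ : ℝ) := by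
  calc s - e ≤ s := tsub_le_self
    _ = (s ^ p) ^ (p⁻¹ : ℝ) := by
        rw [← NNReal.rpow_mul, mul_inv_cancel₀ hp0.ne', NNReal.rpow_one]
    _ ≤ (s ^ p + e ^ p) ^ (p⁻¹ : ℝ) := NNReal.rpow_le_rpow le_self_add (by positivity)

lemma scalar_simp {p : ℝ} (hp0 : 0 < p) {s e : ℝ≥0} (hs : 0 < s) :
    s ^ ((2:ℝ)⁻¹) * ((2:ℝ≥0)⁻¹ * ((1:ℝ≥0) + (e * s ^ (-1:ℝ)) ^ p)) ^ (p⁻¹:ℝ) * s ^ ((2:ℝ)⁻¹)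
      = (2:ℝ≥0)⁻¹ ^ (p⁻¹:ℝ) * (s ^ p + e ^ p) ^ (p⁻¹:ℝ) := by
  have hss : s ^ ((2:ℝ)⁻¹) * s ^ ((2:ℝ)⁻¹) = s := by
    rw [← NNReal.rpow_add hs.ne']; norm_num
  rw [mul_right_comm, hss]
  have hes : (e * s ^ (-1:ℝ)) ^ p = e ^ p * s ^ (-p:ℝ) := by
    rw [NNReal.mul_rpow, ← NNReal.rpow_mul]
    norm_num
  rw [hes]
  have h1 : s ^ p * s ^ (-p:ℝ) = 1 := by
    rw [← NNReal.rpow_add hs.ne']; norm_num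
  have hinner : s ^ p * ((2:ℝ≥0)⁻¹ * ((1:ℝ≥0) + e ^ p * s ^ (-p:ℝ)))
      = (2:ℝ≥0)⁻¹ * (s ^ p + e ^ p) := by
    calc s ^ p * ((2:ℝ≥0)⁻¹ * ((1:ℝ≥0) + e ^ p * s ^ (-p:ℝ)))
        = (2:ℝ≥0)⁻¹ * (s ^ p * 1 + e ^ p * (s ^ p * s ^ (-p:ℝ))) := by ring
      _ = (2:ℝ≥0)⁻¹ * (s ^ p + e ^ p) := by rw [h1]; ring
  have hsp : s = (s ^ p) ^ (p⁻¹:ℝ) := by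
    rw [← NNReal.rpow_mul, mul_inv_cancel₀ hp0.ne', NNReal.rpow_one]
  calc s * ((2:ℝ≥0)⁻¹ * ((1:ℝ≥0) + e ^ p * s ^ (-p:ℝ))) ^ (p⁻¹:ℝ)
      = (s ^ p) ^ (p⁻¹:ℝ) * ((2:ℝ≥0)⁻¹ * ((1:ℝ≥0) + e ^ p * s ^ (-p:ℝ))) ^ (p⁻¹:ℝ) := by
        rw [← hsp]
    _ = (s ^ p * ((2:ℝ≥0)⁻¹ * ((1:ℝ≥0) + e ^ p * s ^ (-p:ℝ)))) ^ (p⁻¹:ℝ) := by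
        rw [← NNReal.mul_rpow]
    _ = ((2:ℝ≥0)⁻¹ * (s ^ p + e ^ p)) ^ (p⁻¹:ℝ) := by rw [hinner]
    _ = (2:ℝ≥0)⁻¹ ^ (p⁻¹:ℝ) * (s ^ p + e ^ p) ^ (p⁻¹:ℝ) := by rw [NNReal.mul_rpow]

/-! ### Operator basics -/

lemma nnsmul_nonneg (r : ℝ≥0) {Z : H →L[ℂ] H} (hZ : 0 ≤ Z) : 0 ≤ r • Z := by
  rw [← cfc_smul_id (R := ℝ≥0) r Z]
  exact cfc_predicate _ Z

lemma one_nonneg : (0 : H →L[ℂ] H) ≤ 1 :=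
  (ContinuousLinearMap.nonneg_iff_isPositive (1 : H →L[ℂ] H)).mpr
    ContinuousLinearMap.isPositive_one

lemma smul_one_nonneg {ε : ℝ} (hε : 0 ≤ ε) : (0 : H →L[ℂ] H) ≤ ε • 1 := by
  have : (ε • (1 : H →L[ℂ] H)) = (⟨ε, hε⟩ : ℝ≥0) • (1 : H →L[ℂ] H) := by
    rfl
  rw [this]
  exact nnsmul_nonneg _ one_nonneg

lemma isUnit_add_smul_one {X : H →L[ℂ] H} (hX : 0 ≤ X) {ε : ℝ} (hε : 0 < ε) :
    IsUnit (X + ε • 1) := by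
  have h1 : IsUnit (ε • (1 : H →L[ℂ] H)) := by
    rw [← Algebra.algebraMap_eq_smul_one]
    exact (isUnit_iff_ne_zero.mpr hε.ne').map (algebraMap ℝ (H →L[ℂ] H))
  refine CStarAlgebra.isUnit_of_le (ε • 1) ?_ (h1.isStrictlyPositive (smul_one_nonneg hε.le))
  exact le_add_of_nonneg_left hX

lemma spectrum_lower {X : H →L[ℂ] H} (hX : 0 ≤ X) {ε : ℝ} (hε : 0 < ε) :
    ∀ s ∈ spectrum ℝ≥0 (X + ε • 1), ε.toNNReal ≤ s := by
  intro s hs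
  by_contra hcon
  rw [not_le] at hcon
  rw [spectrum.mem_iff] at hs
  apply hs
  have hlt : (s : ℝ) < ε := by
    have := NNReal.coe_lt_coe.mpr hcon
    rwa [Real.coe_toNNReal ε hε.le] at this
  have hunit : IsUnit (X + (ε - (s:ℝ)) • 1) := isUnit_add_smul_one hX (sub_pos.mpr hlt)
  have heq : algebraMap ℝ≥0 (H →L[ℂ] H) s - (X + ε • 1) = -(X + (ε - (s:ℝ)) • 1) := by
    rw [Algebra.algebraMap_eq_smul_one, NNReal.smul_def, sub_smul]
    abel
  rw [heq]
  exact hunit.neg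

lemma le_of_strong_limit {T S : H →L[ℂ] H} {F : ℝ → (H →L[ℂ] H)}
    (hlim : ∀ x : H, Filter.Tendsto (fun ε : ℝ => F ε x) (nhdsWithin 0 (Set.Ioi 0)) (nhds (T x)))
    (hle : ∀ ε : ℝ, ε ∈ Set.Ioi (0:ℝ) → S ≤ F ε) : S ≤ T := by
  rw [ContinuousLinearMap.le_def]
  rw [ContinuousLinearMap.isPositive_iff_complex]
  intro x
  have key : Filter.Tendsto (fun ε : ℝ => (inner ℂ ((F ε - S) x) x : ℂ))
      (nhdsWithin 0 (Set.Ioi 0)) (nhds (inner ℂ ((T - S) x) x : ℂ)) := by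
    have h1 : Filter.Tendsto (fun ε : ℝ => (F ε - S) x) (nhdsWithin 0 (Set.Ioi 0))
        (nhds ((T - S) x)) := by
      simp only [ContinuousLinearMap.sub_apply]
      exact (hlim x).sub tendsto_const_nhds
    exact h1.inner tendsto_const_nhds
  have hclosed : IsClosed {z : ℂ | ((RCLike.re z : ℝ) : ℂ) = z ∧ 0 ≤ RCLike.re z} :=
    (isClosed_eq (Complex.continuous_ofReal.comp Complex.continuous_re) continuous_id).inter
      (isClosed_le continuous_const Complex.continuous_re)
  have hmem : ∀ᶠ ε in nhdsWithin (0:ℝ) (Set.Ioi 0),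
      (inner ℂ ((F ε - S) x) x : ℂ) ∈ {z : ℂ | ((RCLike.re z : ℝ) : ℂ) = z ∧ 0 ≤ RCLike.re z} := by
    filter_upwards [self_mem_nhdsWithin] with ε hε
    have := (ContinuousLinearMap.le_def S (F ε)).mp (hle ε hε)
    rw [ContinuousLinearMap.isPositive_iff_complex] at this
    exact this x
  exact hclosed.mem_of_tendsto key hmem

/-! ### The middle factor as a continuous functional calculus -/

lemma middle_cfc {p : ℝ} (hp0 : 0 < p) (M : H →L[ℂ] H) (hM : 0 ≤ M) :
    ((2 : ℝ)⁻¹ • (1 + M ^ p)) ^ p⁻¹ =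
      cfc (fun t : ℝ≥0 => ((2:ℝ≥0)⁻¹ * ((1:ℝ≥0) + t ^ p)) ^ (p⁻¹ : ℝ)) M := by
  have hc0 : Continuous (fun t : ℝ≥0 => t ^ p) := NNReal.continuous_rpow_const hp0.le
  have hc1 : Continuous (fun t : ℝ≥0 => (1:ℝ≥0) + t ^ p) := continuous_const.add hc0
  have hc2 : Continuous (fun t : ℝ≥0 => (2:ℝ≥0)⁻¹ * ((1:ℝ≥0) + t ^ p)) := continuous_const.mul hc1
  have h1 : (2 : ℝ)⁻¹ • (1 + M ^ p) = cfc (fun t : ℝ≥0 => (2:ℝ≥0)⁻¹ * ((1:ℝ≥0) + t ^ p)) M := by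
    rw [cfc_const_mul _ _ M hc1.continuousOn,
      cfc_add M _ _ continuous_const.continuousOn hc0.continuousOn,
      cfc_const_one ℝ≥0 M, ← CFC.rpow_def, NNReal.smul_def, NNReal.coe_inv]
    norm_num
  rw [h1, CFC.rpow_def, ← cfc_comp' (fun t : ℝ≥0 => t ^ (p⁻¹ : ℝ))
    (fun t : ℝ≥0 => (2:ℝ≥0)⁻¹ * ((1:ℝ≥0) + t ^ p)) M
    (NNReal.continuous_rpow_const (by positivity)).continuousOn hc2.continuousOn hM]

/-! ### Lower bound for the mean of invertible positive operators -/

lemma mean_lower {p : ℝ} (hp0 : 0 < p) {X Y : H →L[ℂ] H} (hX : 0 ≤ X) (hY : 0 ≤ Y)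
    (hXu : IsUnit X) :
    (2:ℝ≥0)⁻¹ ^ (p⁻¹:ℝ) • X ≤
      X ^ ((2:ℝ)⁻¹) *
        ((2 : ℝ)⁻¹ • (1 + (X ^ (-(2:ℝ)⁻¹) * Y * X ^ (-(2:ℝ)⁻¹)) ^ p)) ^ p⁻¹ * X ^ ((2:ℝ)⁻¹) ∧
    (2:ℝ≥0)⁻¹ ^ (p⁻¹:ℝ) • Y ≤
      X ^ ((2:ℝ)⁻¹) *
        ((2 : ℝ)⁻¹ • (1 + (X ^ (-(2:ℝ)⁻¹) * Y * X ^ (-(2:ℝ)⁻¹)) ^ p)) ^ p⁻¹ * X ^ ((2:ℝ)⁻¹) := by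
  set d : ℝ≥0 := (2:ℝ≥0)⁻¹ ^ (p⁻¹:ℝ) with hd
  set R : H →L[ℂ] H := X ^ ((2:ℝ)⁻¹) with hR
  set Rn : H →L[ℂ] H := X ^ (-(2:ℝ)⁻¹) with hRn
  set M : H →L[ℂ] H := Rn * Y * Rn with hMdef
  have hq0 : (0:ℝ) ≤ p⁻¹ := by positivity
  have hXspec : (0:ℝ≥0) ∉ spectrum ℝ≥0 X := spectrum.zero_notMem ℝ≥0 hXu
  have hRsa : star R = R := (IsSelfAdjoint.of_nonneg CFC.rpow_nonneg).star_eq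
  have hRnsa : star Rn = Rn := (IsSelfAdjoint.of_nonneg CFC.rpow_nonneg).star_eq
  have hM : 0 ≤ M := by
    have := star_left_conjugate_nonneg hY Rn
    rwa [hRnsa] at this
  have hc0 : Continuous (fun t : ℝ≥0 => t ^ p) := NNReal.continuous_rpow_const hp0.le
  have hc2 : Continuous (fun t : ℝ≥0 => (2:ℝ≥0)⁻¹ * ((1:ℝ≥0) + t ^ p)) :=
    continuous_const.mul (continuous_const.add hc0)
  have hcf : Continuous (fun t : ℝ≥0 => ((2:ℝ≥0)⁻¹ * ((1:ℝ≥0) + t ^ p)) ^ (p⁻¹ : ℝ)) :=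
    (NNReal.continuous_rpow_const hq0).comp hc2
  have hRR : R * R = X := by
    rw [hR, ← CFC.rpow_add hXu]
    norm_num [CFC.rpow_one X hX]
  have hRRn : R * Rn = 1 := CFC.rpow_mul_rpow_neg _ (hXu.isStrictlyPositive hX)
  have hRnR : Rn * R = 1 := CFC.rpow_neg_mul_rpow _ (hXu.isStrictlyPositive hX)
  have hmid := middle_cfc hp0 M hM
  constructor
  · have hd1 : algebraMap ℝ≥0 (H →L[ℂ] H) d ≤ ((2 : ℝ)⁻¹ • (1 + M ^ p)) ^ p⁻¹ := by
      rw [hmid]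
      refine algebraMap_le_cfc _ d M (fun t ht => ?_) hcf.continuousOn hM
      refine NNReal.rpow_le_rpow ?_ hq0
      simpa using
        mul_le_mul_right (le_add_of_nonneg_right (zero_le (a := t^p)) : (1:ℝ≥0) ≤ 1 + t ^ p) (2:ℝ≥0)⁻¹
    have := star_left_conjugate_le_conjugate hd1 R
    rw [hRsa] at this
    refine le_trans (le_of_eq ?_) this
    rw [Algebra.algebraMap_eq_smul_one, mul_smul_comm, smul_mul_assoc, mul_one, hRR]
  · have hd2 : d • M ≤ ((2 : ℝ)⁻¹ • (1 + M ^ p)) ^ p⁻¹ := by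
      rw [hmid, ← cfc_smul_id (R := ℝ≥0) d M hM]
      refine cfc_mono (fun t ht => ?_) (continuous_id.const_smul d : Continuous (fun t : ℝ≥0 => d • t)).continuousOn
        hcf.continuousOn
      have ht1 : (d • t : ℝ≥0) = ((2:ℝ≥0)⁻¹ * t ^ p) ^ (p⁻¹ : ℝ) := by
        rw [NNReal.mul_rpow, smul_eq_mul, ← NNReal.rpow_mul, mul_inv_cancel₀ hp0.ne',
          NNReal.rpow_one]
      rw [ht1]
      exact NNReal.rpow_le_rpow (mul_le_mul_right le_add_self 2⁻¹) hq0
    have := star_left_conjugate_le_conjugate hd2 R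
    rw [hRsa] at this
    refine le_trans (le_of_eq ?_) this
    rw [mul_smul_comm, smul_mul_assoc]
    congr 1
    symm
    show R * (Rn * Y * Rn) * R = Y
    simp only [← mul_assoc]
    rw [hRRn, one_mul, mul_assoc, hRnR, mul_one]

/-! ### Representation of the regularized mean via cfc -/

lemma backward_repr {p : ℝ} (hp0 : 0 < p) {A : H →L[ℂ] H} (hA : 0 ≤ A) {ε : ℝ} (hε0 : 0 < ε) :
    letI c' : ℝ≥0 := (2:ℝ≥0) ^ (p⁻¹:ℝ)
    letI B : H →L[ℂ] H := c' • A + ε • 1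
    B ^ ((2:ℝ)⁻¹) * ((2 : ℝ)⁻¹ • (1 + (B ^ (-(2:ℝ)⁻¹) * (ε • 1) * B ^ (-(2:ℝ)⁻¹)) ^ p)) ^ p⁻¹ *
        B ^ ((2:ℝ)⁻¹) =
      cfc (fun s : ℝ≥0 =>
        s ^ ((2:ℝ)⁻¹) * ((2:ℝ≥0)⁻¹ * ((1:ℝ≥0) + (ε.toNNReal * s ^ (-1:ℝ)) ^ p)) ^ (p⁻¹:ℝ)
          * s ^ ((2:ℝ)⁻¹)) B := by
  set c' : ℝ≥0 := (2:ℝ≥0) ^ (p⁻¹:ℝ) with hc'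
  set e : ℝ≥0 := ε.toNNReal with he
  set B : H →L[ℂ] H := c' • A + ε • 1 with hBdef
  have hX : 0 ≤ c' • A := nnsmul_nonneg _ hA
  have hB : 0 ≤ B := add_nonneg hX (smul_one_nonneg hε0.le)
  have hBu : IsUnit B := isUnit_add_smul_one hX hε0
  have hBs0 : (0:ℝ≥0) ∉ spectrum ℝ≥0 B := spectrum.zero_notMem ℝ≥0 hBu
  have hcg : ContinuousOn (fun s : ℝ≥0 => e * s ^ (-1:ℝ)) (spectrum ℝ≥0 B) :=
    continuousOn_const.mul (NNReal.continuousOn_rpow_const (Or.inl hBs0))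
  have hcf : Continuous (fun t : ℝ≥0 => ((2:ℝ≥0)⁻¹ * ((1:ℝ≥0) + t ^ p)) ^ (p⁻¹ : ℝ)) :=
    (NNReal.continuous_rpow_const (by positivity)).comp
      (continuous_const.mul (continuous_const.add (NNReal.continuous_rpow_const hp0.le)))
  have hchalf : Continuous (fun s : ℝ≥0 => s ^ ((2:ℝ)⁻¹)) :=
    NNReal.continuous_rpow_const (by norm_num)
  have hN : B ^ (-(2:ℝ)⁻¹) * (ε • 1) * B ^ (-(2:ℝ)⁻¹)
      = cfc (fun s : ℝ≥0 => e * s ^ (-1:ℝ)) B := by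
    have h1 : B ^ (-(2:ℝ)⁻¹) * (ε • 1) * B ^ (-(2:ℝ)⁻¹)
        = ε • (B ^ (-(2:ℝ)⁻¹) * B ^ (-(2:ℝ)⁻¹)) := by
      rw [mul_smul_comm, mul_one, smul_mul_assoc]
    have h2 : B ^ (-(2:ℝ)⁻¹) * B ^ (-(2:ℝ)⁻¹) = B ^ (-1:ℝ) := by
      rw [← CFC.rpow_add hBu]; norm_num
    rw [h1, h2, CFC.rpow_def,
      cfc_const_mul e (fun x : ℝ≥0 => x ^ (-1:ℝ)) B (NNReal.continuousOn_rpow_const (Or.inl hBs0)),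
      NNReal.smul_def, he, Real.coe_toNNReal ε hε0.le]
  rw [hN, middle_cfc hp0 _ (cfc_predicate _ B),
    ← cfc_comp' _ _ B hcf.continuousOn hcg hB, CFC.rpow_def]
  rw [cfc_mul (fun s : ℝ≥0 => s ^ ((2:ℝ)⁻¹) * ((2:ℝ≥0)⁻¹ * ((1:ℝ≥0) + (e * s ^ (-1:ℝ)) ^ p)) ^ (p⁻¹:ℝ))
      (fun s : ℝ≥0 => s ^ ((2:ℝ)⁻¹)) B
      (hchalf.continuousOn.mul (hcf.comp_continuousOn hcg)) hchalf.continuousOn]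
  rw [cfc_mul (fun s : ℝ≥0 => s ^ ((2:ℝ)⁻¹))
      (fun s : ℝ≥0 => ((2:ℝ≥0)⁻¹ * ((1:ℝ≥0) + (e * s ^ (-1:ℝ)) ^ p)) ^ (p⁻¹:ℝ)) B
      hchalf.continuousOn (hcf.comp_continuousOn hcg)]

/-! ### Two-sided bounds for the regularized mean -/

lemma backward_bounds {p : ℝ} (hp0 : 0 < p) (hp1 : p ≤ 1) [Nontrivial (H →L[ℂ] H)]
    {A : H →L[ℂ] H} (hA : 0 ≤ A) {ε : ℝ} (hε0 : 0 < ε) (hε1 : ε ≤ 1) :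
    A ≤ cfc (fun s : ℝ≥0 =>
        s ^ ((2:ℝ)⁻¹) * ((2:ℝ≥0)⁻¹ * ((1:ℝ≥0) + (ε.toNNReal * s ^ (-1:ℝ)) ^ p)) ^ (p⁻¹:ℝ)
          * s ^ ((2:ℝ)⁻¹)) ((2:ℝ≥0) ^ (p⁻¹:ℝ) • A + ε • 1) ∧
      cfc (fun s : ℝ≥0 =>
        s ^ ((2:ℝ)⁻¹) * ((2:ℝ≥0)⁻¹ * ((1:ℝ≥0) + (ε.toNNReal * s ^ (-1:ℝ)) ^ p)) ^ (p⁻¹:ℝ)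
          * s ^ ((2:ℝ)⁻¹)) ((2:ℝ≥0) ^ (p⁻¹:ℝ) • A + ε • 1)
        ≤ A + algebraMap ℝ≥0 (H →L[ℂ] H) (((2:ℝ≥0) ^ (p⁻¹:ℝ))⁻¹ *
            (ε.toNNReal + (2:ℝ≥0) ^ (p⁻¹:ℝ) * ((2:ℝ≥0) ^ (p⁻¹:ℝ) * ‖A‖₊ + 1) ^ ((1:ℝ) - p)
              * ε.toNNReal ^ p)) := by
  set c' : ℝ≥0 := (2:ℝ≥0) ^ (p⁻¹:ℝ) with hc'
  set e : ℝ≥0 := ε.toNNReal with he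
  set K₀ : ℝ≥0 := c' * ‖A‖₊ + 1 with hK₀
  set δ : ℝ≥0 := c'⁻¹ * (e + c' * K₀ ^ ((1:ℝ) - p) * e ^ p) with hδ
  set B : H →L[ℂ] H := c' • A + ε • 1 with hBdef
  have hc'pos : (0:ℝ≥0) < c' := NNReal.rpow_pos (by norm_num)
  have hepos : (0:ℝ≥0) < e := Real.toNNReal_pos.mpr hε0
  have hX : 0 ≤ c' • A := nnsmul_nonneg _ hA
  have hB : 0 ≤ B := add_nonneg hX (smul_one_nonneg hε0.le)
  have hBu : IsUnit B := isUnit_add_smul_one hX hε0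
  have hBs0 : (0:ℝ≥0) ∉ spectrum ℝ≥0 B := spectrum.zero_notMem ℝ≥0 hBu
  have hlo : ∀ s ∈ spectrum ℝ≥0 B, e ≤ s := spectrum_lower hX hε0
  have hhi : ∀ s ∈ spectrum ℝ≥0 B, s ≤ K₀ := by
    intro s hs
    refine (spectrum.le_nnnorm_of_mem hs).trans ?_
    rw [← NNReal.coe_le_coe]
    push_cast
    calc (‖B‖ : ℝ) ≤ ‖c' • A‖ + ‖ε • (1:H →L[ℂ] H)‖ := norm_add_le _ _
      _ ≤ (c' : ℝ) * ‖A‖ + ε * ‖(1:H →L[ℂ] H)‖ := by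
          rw [NNReal.smul_def, norm_smul, norm_smul, Real.norm_of_nonneg c'.coe_nonneg,
            Real.norm_of_nonneg hε0.le]
      _ ≤ (c' : ℝ) * ‖A‖ + 1 := by
          have h1 : ‖(1:H →L[ℂ] H)‖ ≤ 1 := by
            rw [ContinuousLinearMap.one_def]; exact ContinuousLinearMap.norm_id_le
          nlinarith [norm_nonneg (1:H →L[ℂ] H)]
  have hcg : ContinuousOn (fun s : ℝ≥0 => e * s ^ (-1:ℝ)) (spectrum ℝ≥0 B) :=
    continuousOn_const.mul (NNReal.continuousOn_rpow_const (Or.inl hBs0))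
  have hcf : Continuous (fun t : ℝ≥0 => ((2:ℝ≥0)⁻¹ * ((1:ℝ≥0) + t ^ p)) ^ (p⁻¹ : ℝ)) :=
    (NNReal.continuous_rpow_const (by positivity)).comp
      (continuous_const.mul (continuous_const.add (NNReal.continuous_rpow_const hp0.le)))
  have hchalf : Continuous (fun s : ℝ≥0 => s ^ ((2:ℝ)⁻¹)) :=
    NNReal.continuous_rpow_const (by norm_num)
  have hcF : ContinuousOn (fun s : ℝ≥0 =>
      s ^ ((2:ℝ)⁻¹) * ((2:ℝ≥0)⁻¹ * ((1:ℝ≥0) + (e * s ^ (-1:ℝ)) ^ p)) ^ (p⁻¹:ℝ)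
        * s ^ ((2:ℝ)⁻¹)) (spectrum ℝ≥0 B) :=
    (hchalf.continuousOn.mul (hcf.comp_continuousOn hcg)).mul hchalf.continuousOn
  have hc_sub : Continuous (fun s : ℝ≥0 => s - e) := by fun_prop
  have hcA : Continuous (fun s : ℝ≥0 => c'⁻¹ * (s - e)) := continuous_const.mul hc_sub
  have hAc : A = cfc (fun s : ℝ≥0 => c'⁻¹ * (s - e)) B := by
    have h1 : cfc (fun s : ℝ≥0 => s - e) B = B - ε • 1 := by
      rw [cfc_tsub (fun s => s) (fun _ => e) B hlo hB continuousOn_id continuousOn_const,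
        cfc_id' ℝ≥0 B hB, cfc_const e B hB, Algebra.algebraMap_eq_smul_one, NNReal.smul_def,
        he, Real.coe_toNNReal ε hε0.le]
    have h2 : B - ε • 1 = c' • A := by rw [hBdef]; abel
    rw [cfc_const_mul _ _ B hc_sub.continuousOn, h1, h2,
      smul_smul, inv_mul_cancel₀ hc'pos.ne', one_smul]
  constructor
  · rw [hAc]
    refine cfc_mono (fun s hs => ?_) hcA.continuousOn hcF
    have hse := hlo s hs
    have hs0 : (0:ℝ≥0) < s := hepos.trans_le hse
    rw [scalar_simp hp0 hs0, NNReal.inv_rpow, ← hc']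
    exact mul_le_mul_right (scalar_lo hp0) _
  · have hAδ : A + algebraMap ℝ≥0 (H →L[ℂ] H) δ = cfc (fun s : ℝ≥0 => c'⁻¹ * (s - e) + δ) B := by
      rw [cfc_add B _ _ hcA.continuousOn continuousOn_const, cfc_const δ B hB, hAc]
    rw [hAδ]
    refine cfc_mono (fun s hs => ?_) hcF (hcA.add continuous_const).continuousOn
    have hse := hlo s hs
    have hsK := hhi s hs
    have hs0 : (0:ℝ≥0) < s := hepos.trans_le hse
    rw [scalar_simp hp0 hs0, NNReal.inv_rpow, ← hc']
    calc c'⁻¹ * (s ^ p + e ^ p) ^ (p⁻¹:ℝ)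
        ≤ c'⁻¹ * (s + c' * K₀ ^ ((1:ℝ) - p) * e ^ p) :=
          mul_le_mul_right (scalar_hi hp0 hp1 hepos hse hsK) _
      _ = c'⁻¹ * ((s - e) + (e + c' * K₀ ^ ((1:ℝ) - p) * e ^ p)) := by
          rw [← add_assoc, tsub_add_cancel_of_le hse]
      _ = c'⁻¹ * (s - e) + δ := by rw [mul_add, hδ]

end KuboAndoAux

open KuboAndoAux

/-- For `0 < p ≤ 1` and a positive operator `A`, one has `A = 0` iff
whenever `A = X 𝔪ₚ Y` with `X, Y` positive, necessarily `X = A` and `Y = A`. -/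
theorem eq_zero_iff_kuboAndo_decomposition_trivial (p : ℝ) (hp0 : 0 < p) (hp1 : p ≤ 1)
    (m : (H →L[ℂ] H) → (H →L[ℂ] H) → (H →L[ℂ] H)) (hm : IsKuboAndoPowerMean p m)
    (A : H →L[ℂ] H) (hA : 0 ≤ A) :
    A = 0 ↔ ∀ X Y : H →L[ℂ] H, 0 ≤ X → 0 ≤ Y → A = m X Y → X = A ∧ Y = A := by
  constructor
  · -- forward direction
    intro h0
    subst h0
    intro X Y hX hY hAeq
    set d : ℝ≥0 := (2:ℝ≥0)⁻¹ ^ (p⁻¹:ℝ) with hd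
    have hdpos : (0:ℝ≥0) < d := NNReal.rpow_pos (by norm_num)
    have key : ∀ {W V : H →L[ℂ] H}, 0 ≤ W → 0 ≤ V → d • W ≤ m W V ∧ d • V ≤ m W V := by
      intro W V hW hV
      have lower : ∀ ε : ℝ, ε ∈ Set.Ioi (0:ℝ) →
          d • W ≤ m (W + ε • 1) (V + ε • 1) ∧ d • V ≤ m (W + ε • 1) (V + ε • 1) := by
        intro ε hε
        rw [Set.mem_Ioi] at hε
        have hWe : 0 ≤ W + ε • 1 := add_nonneg hW (smul_one_nonneg hε.le)
        have hVe : 0 ≤ V + ε • 1 := add_nonneg hV (smul_one_nonneg hε.le)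
        have hWu : IsUnit (W + ε • 1) := isUnit_add_smul_one hW hε
        have hVu : IsUnit (V + ε • 1) := isUnit_add_smul_one hV hε
        have h1 := hm.1 (W + ε • 1) (V + ε • 1) hWe hVe hWu hVu
        have h2 := mean_lower hp0 hWe hVe hWu
        rw [← h1] at h2
        constructor
        · refine le_trans ?_ h2.1
          rw [smul_add]
          exact le_add_of_nonneg_right (nnsmul_nonneg _ (smul_one_nonneg hε.le))
        · refine le_trans ?_ h2.2
          rw [smul_add]
          exact le_add_of_nonneg_right (nnsmul_nonneg _ (smul_one_nonneg hε.le))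
      exact ⟨le_of_strong_limit (hm.2 W V hW hV) (fun ε hε => (lower ε hε).1),
        le_of_strong_limit (hm.2 W V hW hV) (fun ε hε => (lower ε hε).2)⟩
    have hk := key hX hY
    have hX0 : X = 0 := by
      have h1 : d • X ≤ 0 := by rw [hAeq]; exact hk.1
      have h2 : (0:H →L[ℂ] H) ≤ d • X := nnsmul_nonneg _ hX
      have h3 : d • X = 0 := le_antisymm h1 h2
      have : X = d⁻¹ • (d • X) := by
        rw [smul_smul, inv_mul_cancel₀ hdpos.ne', one_smul]
      rw [this, h3, smul_zero]
    have hY0 : Y = 0 := by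
      have h1 : d • Y ≤ 0 := by rw [hAeq]; exact hk.2
      have h2 : (0:H →L[ℂ] H) ≤ d • Y := nnsmul_nonneg _ hY
      have h3 : d • Y = 0 := le_antisymm h1 h2
      have : Y = d⁻¹ • (d • Y) := by
        rw [smul_smul, inv_mul_cancel₀ hdpos.ne', one_smul]
      rw [this, h3, smul_zero]
    exact ⟨hX0, hY0⟩
  · -- backward direction
    intro hdec
    rcases subsingleton_or_nontrivial (H →L[ℂ] H) with hsub | hnt
    · exact Subsingleton.elim A 0
    set c' : ℝ≥0 := (2:ℝ≥0) ^ (p⁻¹:ℝ) with hc'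
    set X : H →L[ℂ] H := c' • A with hXdef
    have hX : 0 ≤ X := nnsmul_nonneg _ hA
    -- the key computation : m X 0 = A
    have hkey : m X 0 = A := by
      ext x
      have h1 := hm.2 X 0 hX le_rfl x
      -- the same net also tends to A x
      have h2 : Filter.Tendsto (fun ε : ℝ => (m (X + ε • 1) (0 + ε • 1)) x)
          (nhdsWithin 0 (Set.Ioi 0)) (nhds (A x)) := by
        rw [tendsto_iff_norm_sub_tendsto_zero]
        refine squeeze_zero' (Filter.Eventually.of_forall (fun _ => norm_nonneg _))
          ?_ ?_ (g := fun ε : ℝ =>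
            ((c':ℝ)⁻¹ * (ε + (c':ℝ) * ((c':ℝ) * ‖A‖ + 1) ^ ((1:ℝ) - p) * ε ^ p)) * ‖x‖)
        · filter_upwards [self_mem_nhdsWithin,
            Filter.le_def.mp nhdsWithin_le_nhds _ (Iio_mem_nhds one_pos)] with ε hε hε1
          rw [Set.mem_Ioi] at hε
          rw [Set.mem_Iio] at hε1
          have hXe : 0 ≤ X + ε • 1 := add_nonneg hX (smul_one_nonneg hε.le)
          have hEe : 0 ≤ (ε • 1 : H →L[ℂ] H) := smul_one_nonneg hε.le
          have hXu : IsUnit (X + ε • 1) := isUnit_add_smul_one hX hε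
          have hEu : IsUnit (ε • 1 : H →L[ℂ] H) := by
            rw [← Algebra.algebraMap_eq_smul_one]
            exact (isUnit_iff_ne_zero.mpr hε.ne').map (algebraMap ℝ (H →L[ℂ] H))
          have hrepr := hm.1 (X + ε • 1) (ε • 1) hXe hEe hXu hEu
          have hcfc := backward_repr hp0 hA hε
          have hb := backward_bounds hp0 hp1 hA hε hε1.le
          set G : H →L[ℂ] H := cfc (fun s : ℝ≥0 =>
            s ^ ((2:ℝ)⁻¹) * ((2:ℝ≥0)⁻¹ * ((1:ℝ≥0) + (ε.toNNReal * s ^ (-1:ℝ)) ^ p)) ^ (p⁻¹:ℝ)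
              * s ^ ((2:ℝ)⁻¹)) (c' • A + ε • 1) with hGdef
          set δ : ℝ≥0 := c'⁻¹ *
            (ε.toNNReal + c' * (c' * ‖A‖₊ + 1) ^ ((1:ℝ) - p) * ε.toNNReal ^ p) with hδ
          have hGA0 : 0 ≤ G - A := sub_nonneg.mpr hb.1
          have hGA1 : G - A ≤ algebraMap ℝ (H →L[ℂ] H) (δ:ℝ) := by
            have hAg : algebraMap ℝ≥0 (H →L[ℂ] H) δ = algebraMap ℝ (H →L[ℂ] H) (δ:ℝ) := by
              rw [Algebra.algebraMap_eq_smul_one, Algebra.algebraMap_eq_smul_one, NNReal.smul_def]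
            rw [← hAg]
            rw [sub_le_iff_le_add, add_comm]
            exact hb.2
          have hnorm : ‖G - A‖ ≤ (δ:ℝ) :=
            (CStarAlgebra.norm_le_iff_le_algebraMap (G - A) δ.coe_nonneg hGA0).mpr hGA1
          have hmG : m (X + ε • 1) (0 + ε • 1) = G := by
            rw [zero_add, hrepr, hXdef, hcfc]
          rw [hmG]
          have hstep : ‖G x - A x‖ ≤ (δ:ℝ) * ‖x‖ := by
            calc ‖G x - A x‖ = ‖(G - A) x‖ := by rw [ContinuousLinearMap.sub_apply]
              _ ≤ ‖G - A‖ * ‖x‖ := (G - A).le_opNorm x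
              _ ≤ (δ:ℝ) * ‖x‖ := by
                  exact mul_le_mul_of_nonneg_right hnorm (norm_nonneg x)
          refine hstep.trans (le_of_eq ?_)
          congr 1
          rw [hδ]
          push_cast [Real.coe_toNNReal ε hε.le]
          ring
        · have hεp : Filter.Tendsto (fun ε : ℝ => ε ^ p) (nhdsWithin 0 (Set.Ioi 0)) (nhds 0) := by
            have hc := (Real.continuousAt_rpow_const 0 p (Or.inr hp0.le)).tendsto
            rw [Real.zero_rpow hp0.ne'] at hc
            exact hc.mono_left nhdsWithin_le_nhds
          have hid : Filter.Tendsto (fun ε : ℝ => ε) (nhdsWithin 0 (Set.Ioi 0)) (nhds 0) :=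
            (continuous_id.tendsto 0).mono_left nhdsWithin_le_nhds
          have := ((tendsto_const_nhds (x := (c':ℝ)⁻¹)).mul
            (hid.add ((tendsto_const_nhds
              (x := (c':ℝ) * ((c':ℝ) * ‖A‖ + 1) ^ ((1:ℝ) - p))).mul hεp))).mul_const ‖x‖
          simpa using this
      exact tendsto_nhds_unique h1 h2
    obtain ⟨-, h0A⟩ := hdec X 0 hX le_rfl hkey.symm
    exact h0A.symm
end

section
/- Let 0 < p ≤ 1 and let H be a complex Hilbert space. An operator B ∈ B(H)⁺ is invertible if and only if 𝔍(B) ⊆ 𝔍(A) for every A ∈ B(H)⁺, i.e. 𝔍(B) is the minimum of the family { 𝔍(A) : A ∈ B(H)⁺ } partially ordered by inclusion. -/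
open scoped NNReal

set_option synthInstance.maxHeartbeats 1000000
set_option maxHeartbeats 1000000

variable {H : Type*} [NormedAddCommGroup H] [InnerProductSpace ℂ H] [CompleteSpace H]

/-- `𝔍(A)`: the set of all operators of the form `(…((A 𝔪ₚ X₁) 𝔪ₚ X₂)…) 𝔪ₚ Xₙ` with
`n ≥ 1` and `X₁, …, Xₙ` positive operators. -/
def meanIterates (m : (H →L[ℂ] H) → (H →L[ℂ] H) → (H →L[ℂ] H)) (A : H →L[ℂ] H) :
    Set (H →L[ℂ] H) :=
  {B | ∃ l : List (H →L[ℂ] H), l ≠ [] ∧ (∀ X ∈ l, 0 ≤ X) ∧ B = l.foldl m A}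

open Filter Set

local notation "𝔹" => H →L[ℂ] H


lemma nnsmul_eq_algebraMap_mul (r : ℝ≥0) (A : 𝔹) :
    (r : ℝ) • A = algebraMap ℝ≥0 𝔹 r * A := by
  rw [← NNReal.smul_def, Algebra.smul_def]

lemma nnsmul_le_nnsmul (r : ℝ≥0) {A B : 𝔹} (h : A ≤ B) : (r : ℝ) • A ≤ (r : ℝ) • B := by
  have hs : star (algebraMap ℝ≥0 𝔹 (NNReal.sqrt r)) = algebraMap ℝ≥0 𝔹 (NNReal.sqrt r) := by
    rw [← algebraMap_star_comm]; simp
  have h2 := star_left_conjugate_le_conjugate h (algebraMap ℝ≥0 𝔹 (NNReal.sqrt r))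
  rw [hs] at h2
  have key : ∀ C : 𝔹, algebraMap ℝ≥0 𝔹 (NNReal.sqrt r) * C * algebraMap ℝ≥0 𝔹 (NNReal.sqrt r)
      = (r : ℝ) • C := by
    intro C
    rw [mul_assoc, ← Algebra.commutes, ← mul_assoc, ← map_mul, NNReal.mul_self_sqrt,
      ← Algebra.smul_def, NNReal.smul_def]
  rwa [key A, key B] at h2

lemma nnsmul_nonneg (r : ℝ≥0) {A : 𝔹} (h : 0 ≤ A) : 0 ≤ (r : ℝ) • A := by
  simpa using nnsmul_le_nnsmul r h

lemma smul_isUnit {r : ℝ} (hr : r ≠ 0) {A : 𝔹} (h : IsUnit A) : IsUnit (r • A) := by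
  obtain ⟨u, rfl⟩ := h
  refine ⟨⟨r • (u : 𝔹), r⁻¹ • ((u⁻¹ : (𝔹)ˣ) : 𝔹), ?_, ?_⟩, rfl⟩ <;>
    rw [smul_mul_smul_comm] <;> simp [hr, inv_mul_cancel₀, mul_inv_cancel₀]

lemma one_nonneg : (0 : 𝔹) ≤ 1 :=
  (ContinuousLinearMap.nonneg_iff_isPositive _).mpr ContinuousLinearMap.isPositive_one

lemma nnsmul_one_isUnit {r : ℝ≥0} (hr : 0 < r) : IsUnit ((r : ℝ) • (1 : 𝔹)) :=
  smul_isUnit (by exact_mod_cast hr.ne') isUnit_one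

lemma isUnit_of_smul_one_le {r : ℝ≥0} (hr : 0 < r) {A : 𝔹} (h : (r : ℝ) • 1 ≤ A) : IsUnit A :=
  CStarAlgebra.isUnit_of_le _ h ((nnsmul_one_isUnit hr).isStrictlyPositive (nnsmul_nonneg r one_nonneg))

lemma exists_smul_one_le {A : 𝔹} (hA : 0 ≤ A) (hu : IsUnit A) :
    ∃ r : ℝ≥0, 0 < r ∧ (r : ℝ) • 1 ≤ A := by
  rcases subsingleton_or_nontrivial (H →L[ℂ] H) with hs | hn
  · exact ⟨1, one_pos, le_of_eq (Subsingleton.elim _ A)⟩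
  · have h0 : ∀ x ∈ spectrum ℝ A, 0 < x := by
      intro x hx
      rcases (spectrum_nonneg_of_nonneg hA hx).lt_or_eq with h | h
      · exact h
      · exact absurd (h ▸ hx) (spectrum.zero_notMem ℝ hu)
    obtain ⟨r, hr, hle⟩ := (CFC.exists_pos_algebraMap_le_iff (a := A)
      (IsSelfAdjoint.of_nonneg hA)).mpr h0
    refine ⟨r.toNNReal, by simpa using hr, ?_⟩
    rwa [Real.coe_toNNReal _ hr.le, ← Algebra.algebraMap_eq_smul_one]

lemma le_nnnorm_smul_one (A : 𝔹) (hA : IsSelfAdjoint A) : A ≤ (‖A‖₊ : ℝ) • 1 := by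
  have := IsSelfAdjoint.le_algebraMap_norm_self (a := A) hA
  rwa [Algebra.algebraMap_eq_smul_one] at this

lemma nnsmul_one_le_nnsmul_one {r s : ℝ≥0} (h : r ≤ s) : (r : ℝ) • (1:𝔹) ≤ (s : ℝ) • 1 := by
  have h2 : (s:ℝ) • (1:𝔹) = (r:ℝ) • 1 + ((s - r : ℝ≥0) : ℝ) • 1 := by
    rw [← add_smul]
    norm_cast
    rw [add_tsub_cancel_of_le h]
  rw [h2]
  exact le_add_of_nonneg_right (nnsmul_nonneg _ one_nonneg)
section Core
variable {p : ℝ}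

lemma spectrum_lb {A : 𝔹} (hA : 0 ≤ A) {r : ℝ≥0} (h : (r : ℝ) • 1 ≤ A) :
    ∀ x ∈ spectrum ℝ≥0 A, r ≤ x := by
  have h' : algebraMap ℝ≥0 𝔹 r ≤ A := by rwa [Algebra.algebraMap_eq_smul_one]
  have := (cfc_nnreal_le_iff (fun _ => r) (fun t => t) A (.nnreal_of_nonneg hA)
    (by fun_prop) (by fun_prop) hA)
  rw [cfc_id' ℝ≥0 A, cfc_const r A] at this
  exact this.mp h'

/-- The scalar `2 ^ (-1/p)`. -/
noncomputable def cNN (p : ℝ) : ℝ≥0 := (2 : ℝ≥0) ^ (-p⁻¹ : ℝ)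

lemma cNN_pos : 0 < cNN p := NNReal.rpow_pos two_pos

/-- The representing function of the power mean. -/
noncomputable def gF (p : ℝ) : ℝ≥0 → ℝ≥0 := fun t => ((2 : ℝ≥0)⁻¹ * (1 + t ^ (p : ℝ))) ^ (p⁻¹ : ℝ)

lemma gF_continuous (hp0 : 0 < p) : Continuous (gF p) := by
  apply NNReal.continuous_rpow_const (by positivity) |>.comp
  exact continuous_const.mul (continuous_const.add
    (NNReal.continuous_rpow_const hp0.le))

lemma cNN_le_gF (hp0 : 0 < p) (t : ℝ≥0) : cNN p ≤ gF p t := by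
  have h1 : cNN p = ((2:ℝ≥0)⁻¹) ^ (p⁻¹ : ℝ) := by
    rw [NNReal.inv_rpow, ← NNReal.rpow_neg, cNN]
  rw [h1, gF]
  apply NNReal.rpow_le_rpow _ (by positivity)
  calc (2:ℝ≥0)⁻¹ = 2⁻¹ * 1 := (mul_one _).symm
    _ ≤ 2⁻¹ * (1 + t ^ (p:ℝ)) := by gcongr; exact le_self_add

lemma cNN_mul_le_gF (hp0 : 0 < p) (t : ℝ≥0) : cNN p * t ≤ gF p t := by
  have h1 : cNN p * t = ((2:ℝ≥0)⁻¹ * t ^ (p:ℝ)) ^ (p⁻¹ : ℝ) := by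
    rw [NNReal.mul_rpow, ← NNReal.rpow_mul, mul_inv_cancel₀ hp0.ne', NNReal.rpow_one,
      NNReal.inv_rpow, ← NNReal.rpow_neg, cNN]
  rw [h1, gF]
  apply NNReal.rpow_le_rpow _ (by positivity)
  gcongr
  exact le_add_self

lemma mid_eq_cfc (hp0 : 0 < p) (T : 𝔹) (hT : 0 ≤ T) :
    ((2 : ℝ)⁻¹ • ((1 : 𝔹) + T ^ p)) ^ p⁻¹ = cfc (gF p) T := by
  have hc : ContinuousOn (fun t : ℝ≥0 => t ^ (p : ℝ)) (spectrum ℝ≥0 T) :=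
    (NNReal.continuous_rpow_const hp0.le).continuousOn
  have hadd : (1 : 𝔹) + T ^ p = cfc (fun t : ℝ≥0 => 1 + t ^ (p : ℝ)) T := by
    have h := cfc_const_add (R := ℝ≥0) (A := 𝔹) 1 (fun t : ℝ≥0 => t ^ (p : ℝ)) T hc hT
    rw [h, map_one, CFC.rpow_def]
  have hc1 : ContinuousOn (fun t : ℝ≥0 => 1 + t ^ (p : ℝ)) (spectrum ℝ≥0 T) :=
    (continuous_const.add (NNReal.continuous_rpow_const hp0.le)).continuousOn
  have hs : (2 : ℝ)⁻¹ • ((1 : 𝔹) + T ^ p)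
      = cfc (fun t : ℝ≥0 => (2:ℝ≥0)⁻¹ * (1 + t ^ (p : ℝ))) T := by
    have h := cfc_const_mul (R := ℝ≥0) (A := 𝔹) (2:ℝ≥0)⁻¹ (fun t : ℝ≥0 => 1 + t ^ (p : ℝ)) T hc1
    rw [h, ← hadd, NNReal.smul_def, NNReal.coe_inv, NNReal.coe_ofNat]
  have hc2 : ContinuousOn (fun t : ℝ≥0 => t ^ (p⁻¹ : ℝ))
      ((fun t : ℝ≥0 => (2:ℝ≥0)⁻¹ * (1 + t ^ (p : ℝ))) '' (spectrum ℝ≥0 T)) :=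
    (NNReal.continuous_rpow_const (by positivity)).continuousOn
  have hc3 : ContinuousOn (fun t : ℝ≥0 => (2:ℝ≥0)⁻¹ * (1 + t ^ (p : ℝ))) (spectrum ℝ≥0 T) :=
    (continuous_const.mul (continuous_const.add
      (NNReal.continuous_rpow_const hp0.le))).continuousOn
  rw [hs, CFC.rpow_def, ← cfc_comp' (R := ℝ≥0) (A := 𝔹) _ _ T hc2 hc3]
  rfl
end Core
section InvCore
variable {p : ℝ}

/-- The mean formula expression. -/
noncomputable def meanF (p : ℝ) (A B : 𝔹) : 𝔹 :=
  A ^ ((2 : ℝ)⁻¹) *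
    ((2 : ℝ)⁻¹ • (1 + (A ^ (-(2 : ℝ)⁻¹) * B * A ^ (-(2 : ℝ)⁻¹)) ^ p)) ^ p⁻¹ *
    A ^ ((2 : ℝ)⁻¹)

lemma rpow_half_mul_self {A : 𝔹} (hA : 0 ≤ A) (uA : IsUnit A) :
    A ^ ((2 : ℝ)⁻¹) * A ^ ((2 : ℝ)⁻¹) = A := by
  have spec0 : (0:ℝ≥0) ∉ spectrum ℝ≥0 A := spectrum.zero_notMem ℝ≥0 uA
  rw [← CFC.rpow_add (a := A) (x := (2:ℝ)⁻¹) (y := (2:ℝ)⁻¹) uA]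
  norm_num
  exact CFC.rpow_one A hA

lemma conj_inv_half {A B : 𝔹} (hA : 0 ≤ A) (uA : IsUnit A) :
    A ^ ((2 : ℝ)⁻¹) * (A ^ (-(2 : ℝ)⁻¹) * B * A ^ (-(2 : ℝ)⁻¹)) * A ^ ((2 : ℝ)⁻¹) = B := by
  have spec0 : (0:ℝ≥0) ∉ spectrum ℝ≥0 A := spectrum.zero_notMem ℝ≥0 uA
  have h1 : A ^ ((2:ℝ)⁻¹) * A ^ (-(2:ℝ)⁻¹) = 1 := CFC.rpow_mul_rpow_neg _ (uA.isStrictlyPositive hA)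
  have h2 : A ^ (-(2:ℝ)⁻¹) * A ^ ((2:ℝ)⁻¹) = 1 := CFC.rpow_neg_mul_rpow _ (uA.isStrictlyPositive hA)
  have h3 : A ^ ((2:ℝ)⁻¹) * (A ^ (-(2:ℝ)⁻¹) * B * A ^ (-(2:ℝ)⁻¹)) * A ^ ((2:ℝ)⁻¹)
      = (A ^ ((2:ℝ)⁻¹) * A ^ (-(2:ℝ)⁻¹)) * B * (A ^ (-(2:ℝ)⁻¹) * A ^ ((2:ℝ)⁻¹)) := by
    simp only [mul_assoc]
  rw [h3, h1, h2, one_mul, mul_one]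

lemma conj_half_inv {A B : 𝔹} (hA : 0 ≤ A) (uA : IsUnit A) :
    A ^ (-(2 : ℝ)⁻¹) * (A ^ ((2 : ℝ)⁻¹) * B * A ^ ((2 : ℝ)⁻¹)) * A ^ (-(2 : ℝ)⁻¹) = B := by
  have spec0 : (0:ℝ≥0) ∉ spectrum ℝ≥0 A := spectrum.zero_notMem ℝ≥0 uA
  have h1 : A ^ ((2:ℝ)⁻¹) * A ^ (-(2:ℝ)⁻¹) = 1 := CFC.rpow_mul_rpow_neg _ (uA.isStrictlyPositive hA)
  have h2 : A ^ (-(2:ℝ)⁻¹) * A ^ ((2:ℝ)⁻¹) = 1 := CFC.rpow_neg_mul_rpow _ (uA.isStrictlyPositive hA)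
  have h3 : A ^ (-(2:ℝ)⁻¹) * (A ^ ((2:ℝ)⁻¹) * B * A ^ ((2:ℝ)⁻¹)) * A ^ (-(2:ℝ)⁻¹)
      = (A ^ (-(2:ℝ)⁻¹) * A ^ ((2:ℝ)⁻¹)) * B * (A ^ ((2:ℝ)⁻¹) * A ^ (-(2:ℝ)⁻¹)) := by
    simp only [mul_assoc]
  rw [h3, h1, h2, one_mul, mul_one]

lemma conj_inv_one {A : 𝔹} (hA : 0 ≤ A) (uA : IsUnit A) :
    A ^ (-(2 : ℝ)⁻¹) * A * A ^ (-(2 : ℝ)⁻¹) = 1 := by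
  have := CFC.conjugate_rpow_neg_one_half (a := A) (uA.isStrictlyPositive hA)
  rwa [show (-(1/2) : ℝ) = -(2:ℝ)⁻¹ by norm_num] at this

lemma meanF_nonneg (hp0 : 0 < p) {A B : 𝔹} (hA : 0 ≤ A) (hB : 0 ≤ B) :
    0 ≤ meanF p A B :=
  conjugate_nonneg_of_nonneg CFC.rpow_nonneg CFC.rpow_nonneg

lemma meanF_fst_le (hp0 : 0 < p) {A B : 𝔹} (hA : 0 ≤ A) (hB : 0 ≤ B)
    (uA : IsUnit A) : ((cNN p : ℝ)) • A ≤ meanF p A B := by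
  set T := A ^ (-(2 : ℝ)⁻¹) * B * A ^ (-(2 : ℝ)⁻¹) with hTdef
  have hT : 0 ≤ T := conjugate_nonneg_of_nonneg hB CFC.rpow_nonneg
  have hmid : ((2 : ℝ)⁻¹ • ((1:𝔹) + T ^ p)) ^ p⁻¹ = cfc (gF p) T := mid_eq_cfc hp0 T hT
  have step1 : algebraMap ℝ≥0 𝔹 (cNN p) ≤ cfc (gF p) T :=
    algebraMap_le_cfc (gF p) (cNN p) T (fun t _ => cNN_le_gF hp0 t)
      (gF_continuous hp0).continuousOn hT
  have hsa : IsSelfAdjoint (A ^ ((2:ℝ)⁻¹)) := IsSelfAdjoint.of_nonneg CFC.rpow_nonneg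
  have step2 := hsa.conjugate_le_conjugate step1
  have lhs_eq : A ^ ((2:ℝ)⁻¹) * algebraMap ℝ≥0 𝔹 (cNN p) * A ^ ((2:ℝ)⁻¹)
      = ((cNN p : ℝ)) • A := by
    rw [← Algebra.commutes, mul_assoc, ← nnsmul_eq_algebraMap_mul,
      rpow_half_mul_self hA uA]
  rw [lhs_eq] at step2
  rw [meanF, ← hTdef, hmid]
  exact step2

lemma meanF_snd_le (hp0 : 0 < p) {A B : 𝔹} (hA : 0 ≤ A) (hB : 0 ≤ B)
    (uA : IsUnit A) : ((cNN p : ℝ)) • B ≤ meanF p A B := by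
  set T := A ^ (-(2 : ℝ)⁻¹) * B * A ^ (-(2 : ℝ)⁻¹) with hTdef
  have hT : 0 ≤ T := conjugate_nonneg_of_nonneg hB CFC.rpow_nonneg
  have hmid : ((2 : ℝ)⁻¹ • ((1:𝔹) + T ^ p)) ^ p⁻¹ = cfc (gF p) T := mid_eq_cfc hp0 T hT
  have step1 : (cNN p) • T ≤ cfc (gF p) T := by
    have hid := cfc_const_mul_id (R := ℝ≥0) (cNN p) T hT
    rw [← hid]
    exact cfc_mono (fun t _ => cNN_mul_le_gF hp0 t)
      (Continuous.continuousOn (by continuity))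
      (gF_continuous hp0).continuousOn
  have hsa : IsSelfAdjoint (A ^ ((2:ℝ)⁻¹)) := IsSelfAdjoint.of_nonneg CFC.rpow_nonneg
  have step2 := hsa.conjugate_le_conjugate step1
  have lhs_eq : A ^ ((2:ℝ)⁻¹) * ((cNN p) • T) * A ^ ((2:ℝ)⁻¹) = ((cNN p : ℝ)) • B := by
    rw [mul_smul_comm, smul_mul_assoc, conj_inv_half hA uA, NNReal.smul_def]
  rw [lhs_eq] at step2
  rw [meanF, ← hTdef, hmid]
  exact step2

lemma meanF_self (hp0 : 0 < p) {A : 𝔹} (hA : 0 ≤ A) (uA : IsUnit A) :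
    meanF p A A = A := by
  rw [meanF, conj_inv_one hA uA, CFC.one_rpow]
  have h2 : (2 : ℝ)⁻¹ • ((1:𝔹) + 1) = 1 := by
    rw [← two_smul ℝ (1:𝔹), smul_smul]
    norm_num
  rw [h2, CFC.one_rpow, mul_one, rpow_half_mul_self hA uA]
end InvCore
section Solv
variable {p : ℝ}

lemma isUnit_rpow_half {A : 𝔹} (hA : 0 ≤ A) (uA : IsUnit A) :
    IsUnit (A ^ ((2:ℝ)⁻¹)) := by
  have spec0 : (0:ℝ≥0) ∉ spectrum ℝ≥0 A := spectrum.zero_notMem ℝ≥0 uA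
  exact ⟨⟨A ^ ((2:ℝ)⁻¹), A ^ (-(2:ℝ)⁻¹),
    CFC.rpow_mul_rpow_neg _ (uA.isStrictlyPositive hA), CFC.rpow_neg_mul_rpow _ (uA.isStrictlyPositive hA)⟩, rfl⟩

/-- Inverse of the representing function. -/
noncomputable def phiF (p : ℝ) : ℝ≥0 → ℝ≥0 := fun t => (2 * t ^ (p:ℝ) - 1) ^ (p⁻¹ : ℝ)

lemma phiF_continuous (hp0 : 0 < p) : Continuous (phiF p) := by
  apply (NNReal.continuous_rpow_const (by positivity)).comp
  exact (continuous_const.mul (NNReal.continuous_rpow_const hp0.le)).sub continuous_const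

lemma base_ge (hp0 : 0 < p) (hp1 : p ≤ 1) {t : ℝ≥0} (ht : 3/4 ≤ t) :
    (3/2 : ℝ≥0) ≤ 2 * t ^ (p : ℝ) := by
  have h1 : ((3/4 : ℝ≥0)) ^ (p : ℝ) ≤ t ^ (p : ℝ) := NNReal.rpow_le_rpow ht hp0.le
  have h2 : (3/4 : ℝ≥0) ≤ (3/4 : ℝ≥0) ^ (p : ℝ) := by
    have := NNReal.rpow_le_rpow_of_exponent_ge (x := (3/4 : ℝ≥0))
      (by rw [← NNReal.coe_pos]; norm_num)
      (by rw [← NNReal.coe_le_coe]; push_cast; norm_num) hp1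
    rwa [NNReal.rpow_one] at this
  calc (3/2 : ℝ≥0) = 2 * (3/4) := by rw [← NNReal.coe_inj]; push_cast; norm_num
    _ ≤ 2 * t ^ (p : ℝ) := by gcongr; exact h2.trans h1

lemma one_le_three_halves : (1:ℝ≥0) ≤ 3/2 := by
  rw [← NNReal.coe_le_coe]; push_cast; norm_num

lemma phiF_lb (hp0 : 0 < p) (hp1 : p ≤ 1) {t : ℝ≥0} (ht : 3/4 ≤ t) :
    (2⁻¹ : ℝ≥0) ^ (p⁻¹ : ℝ) ≤ phiF p t := by
  apply NNReal.rpow_le_rpow _ (by positivity)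
  have hb := base_ge hp0 hp1 ht
  rw [le_tsub_iff_right (one_le_three_halves.trans hb)]
  have h1 : (2⁻¹ : ℝ≥0) + 1 = 3/2 := by rw [← NNReal.coe_inj]; push_cast; norm_num
  rw [h1]; exact hb

lemma phiF_base_pos (hp0 : 0 < p) : (0 : ℝ≥0) < (2⁻¹ : ℝ≥0) ^ (p⁻¹ : ℝ) :=
  NNReal.rpow_pos (by norm_num)

lemma gF_phiF (hp0 : 0 < p) (hp1 : p ≤ 1) {t : ℝ≥0} (ht : 3/4 ≤ t) :
    gF p (phiF p t) = t := by
  rw [gF, phiF, ← NNReal.rpow_mul, inv_mul_cancel₀ hp0.ne', NNReal.rpow_one]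
  rw [add_tsub_cancel_of_le (one_le_three_halves.trans (base_ge hp0 hp1 ht))]
  rw [← mul_assoc, inv_mul_cancel₀ (two_ne_zero), one_mul, ← NNReal.rpow_mul,
    mul_inv_cancel₀ hp0.ne', NNReal.rpow_one]

lemma solv (hp0 : 0 < p) (hp1 : p ≤ 1) {C D : 𝔹} (hC : 0 ≤ C) (uC : IsUnit C)
    (h : ((3/4 : ℝ≥0) : ℝ) • C ≤ D) :
    ∃ X : 𝔹, 0 ≤ X ∧ IsUnit X ∧ meanF p C X = D := by
  set S := C ^ (-(2:ℝ)⁻¹) * D * C ^ (-(2:ℝ)⁻¹) with hSdef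
  have hD : 0 ≤ D := le_trans (nnsmul_nonneg _ hC) h
  have hS : 0 ≤ S := conjugate_nonneg_of_nonneg hD CFC.rpow_nonneg
  have hsa : IsSelfAdjoint (C ^ (-(2:ℝ)⁻¹)) := IsSelfAdjoint.of_nonneg CFC.rpow_nonneg
  have lower : ((3/4 : ℝ≥0) : ℝ) • (1:𝔹) ≤ S := by
    have step := hsa.conjugate_le_conjugate h
    rwa [mul_smul_comm, smul_mul_assoc, conj_inv_one hC uC] at step
  have spec_ge : ∀ t ∈ spectrum ℝ≥0 S, 3/4 ≤ t := spectrum_lb hS lower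
  set Φ := cfc (phiF p) S with hΦdef
  have hΦ : 0 ≤ Φ := cfc_predicate _ S
  have unitΦ : IsUnit Φ := by
    apply isUnit_of_smul_one_le (phiF_base_pos hp0)
    have step := algebraMap_le_cfc (R := ℝ≥0) (phiF p) ((2⁻¹ : ℝ≥0) ^ (p⁻¹ : ℝ)) S
      (fun t htt => phiF_lb hp0 hp1 (spec_ge t htt)) (phiF_continuous hp0).continuousOn hS
    rwa [Algebra.algebraMap_eq_smul_one, NNReal.smul_def] at step
  refine ⟨C ^ ((2:ℝ)⁻¹) * Φ * C ^ ((2:ℝ)⁻¹), conjugate_nonneg_of_nonneg hΦ CFC.rpow_nonneg,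
    ((isUnit_rpow_half hC uC).mul unitΦ).mul (isUnit_rpow_half hC uC), ?_⟩
  have TX : C ^ (-(2:ℝ)⁻¹) * (C ^ ((2:ℝ)⁻¹) * Φ * C ^ ((2:ℝ)⁻¹)) * C ^ (-(2:ℝ)⁻¹) = Φ :=
    conj_half_inv hC uC
  rw [meanF, TX, mid_eq_cfc hp0 Φ hΦ]
  have hcomp : cfc (gF p) Φ = cfc (fun t => gF p (phiF p t)) S := by
    rw [hΦdef, ← cfc_comp' (R := ℝ≥0) (A := 𝔹) (gF p) (phiF p) S
      (gF_continuous hp0).continuousOn (phiF_continuous hp0).continuousOn]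
  have hcongr : cfc (fun t => gF p (phiF p t)) S = cfc (fun t : ℝ≥0 => t) S :=
    cfc_congr (fun t htt => gF_phiF hp0 hp1 (spec_ge t htt))
  rw [hcomp, hcongr, cfc_id' ℝ≥0 S]
  show C ^ ((2:ℝ)⁻¹) * (C ^ (-(2:ℝ)⁻¹) * D * C ^ (-(2:ℝ)⁻¹)) * C ^ ((2:ℝ)⁻¹) = D
  exact conj_inv_half hC uC
end Solv
section Limits
variable {p : ℝ} {m : (H →L[ℂ] H) → (H →L[ℂ] H) → (H →L[ℂ] H)}

lemma le_of_strong_approx {f g : ℝ → 𝔹} {S T : 𝔹}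
    (hfg : ∀ ε : ℝ, 0 < ε → f ε ≤ g ε)
    (hf : ∀ x, Filter.Tendsto (fun ε => f ε x) (nhdsWithin 0 (Set.Ioi 0)) (nhds (S x)))
    (hg : ∀ x, Filter.Tendsto (fun ε => g ε x) (nhdsWithin 0 (Set.Ioi 0)) (nhds (T x))) :
    S ≤ T := by
  rw [ContinuousLinearMap.le_def]
  have hev : ∀ᶠ ε in nhdsWithin (0:ℝ) (Set.Ioi 0), (g ε - f ε).IsPositive :=
    eventually_nhdsWithin_of_forall
      (fun ε hε => (ContinuousLinearMap.le_def (f ε) (g ε)).mp (hfg ε hε))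
  have key : ∀ x y : H, Filter.Tendsto (fun ε => (inner ℂ ((g ε - f ε) x) y : ℂ))
      (nhdsWithin 0 (Set.Ioi 0)) (nhds (inner ℂ ((T - S) x) y)) := by
    intro x y
    have h1 : Filter.Tendsto (fun ε => (g ε - f ε) x) (nhdsWithin 0 (Set.Ioi 0))
        (nhds ((T - S) x)) := by
      simp only [ContinuousLinearMap.sub_apply]
      exact (hg x).sub (hf x)
    exact h1.inner tendsto_const_nhds
  have key' : ∀ x y : H, Filter.Tendsto (fun ε => (inner ℂ x ((g ε - f ε) y) : ℂ))
      (nhdsWithin 0 (Set.Ioi 0)) (nhds (inner ℂ x ((T - S) y))) := by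
    intro x y
    have h1 : Filter.Tendsto (fun ε => (g ε - f ε) y) (nhdsWithin 0 (Set.Ioi 0))
        (nhds ((T - S) y)) := by
      simp only [ContinuousLinearMap.sub_apply]
      exact (hg y).sub (hf y)
    exact Filter.Tendsto.inner tendsto_const_nhds h1
  constructor
  · intro x y
    have e2 : Filter.Tendsto (fun ε => (inner ℂ ((g ε - f ε) x) y : ℂ))
        (nhdsWithin 0 (Set.Ioi 0)) (nhds (inner ℂ x ((T - S) y))) := by
      refine (key' x y).congr' ?_
      filter_upwards [hev] with ε hε
      have := ContinuousLinearMap.isSelfAdjoint_iff_isSymmetric.mp hε.isSelfAdjoint x y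
      simpa [inner_sub_left, inner_sub_right] using this.symm
    have := tendsto_nhds_unique (key x y) e2
    simpa [inner_sub_left, inner_sub_right] using this
  · intro x
    have e1 : Filter.Tendsto (fun ε => RCLike.re (inner ℂ ((g ε - f ε) x) x : ℂ))
        (nhdsWithin 0 (Set.Ioi 0)) (nhds (RCLike.re (inner ℂ ((T - S) x) x : ℂ))) :=
      (RCLike.continuous_re.tendsto _).comp (key x x)
    refine ge_of_tendsto e1 ?_
    filter_upwards [hev] with ε hε
    exact hε.2 x

variable (hm : IsKuboAndoPowerMean (H := H) p m)

lemma eps_shift_nonneg {A : 𝔹} (hA : 0 ≤ A) {ε : ℝ} (hε : 0 < ε) : 0 ≤ A + ε • 1 := by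
  have h1 : (0:𝔹) ≤ ε • 1 := by
    rw [show ε = ((ε.toNNReal : ℝ)) by rw [Real.coe_toNNReal _ hε.le]]
    exact nnsmul_nonneg _ one_nonneg
  calc (0:𝔹) ≤ A := hA
    _ ≤ A + ε • 1 := le_add_of_nonneg_right h1

lemma eps_shift_isUnit {A : 𝔹} (hA : 0 ≤ A) {ε : ℝ} (hε : 0 < ε) : IsUnit (A + ε • 1) := by
  have h1 : (0:𝔹) ≤ ε • 1 := by
    rw [show ε = ((ε.toNNReal : ℝ)) by rw [Real.coe_toNNReal _ hε.le]]
    exact nnsmul_nonneg _ one_nonneg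
  exact CStarAlgebra.isUnit_of_le _ (le_add_of_nonneg_left hA) ((smul_isUnit hε.ne' isUnit_one).isStrictlyPositive h1)

include hm in
lemma m_eq_meanF {A B : 𝔹} (hA : 0 ≤ A) (hB : 0 ≤ B) (uA : IsUnit A) (uB : IsUnit B) :
    m A B = meanF p A B := hm.1 A B hA hB uA uB

include hm in
lemma m_nonneg {A B : 𝔹} (hA : 0 ≤ A) (hB : 0 ≤ B) (hp0 : 0 < p) : 0 ≤ m A B := by
  refine le_of_strong_approx (f := fun _ => (0:𝔹))
    (g := fun ε => m (A + ε • 1) (B + ε • 1)) (fun ε hε => ?_) (fun x => ?_) (fun x => hm.2 A B hA hB x)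
  · beta_reduce
    rw [m_eq_meanF hm (eps_shift_nonneg hA hε) (eps_shift_nonneg hB hε)
      (eps_shift_isUnit hA hε) (eps_shift_isUnit hB hε)]
    exact meanF_nonneg hp0 (eps_shift_nonneg hA hε) (eps_shift_nonneg hB hε)
  · simpa using tendsto_const_nhds

lemma smul_shift_tendsto (c : ℝ≥0) (A : 𝔹) (x : H) :
    Filter.Tendsto (fun ε : ℝ => ((c : ℝ) • (A + ε • 1)) x) (nhdsWithin 0 (Set.Ioi 0))
      (nhds (((c : ℝ) • A) x)) := by
  have h1 : Filter.Tendsto (fun ε : ℝ => ε • x) (nhdsWithin (0:ℝ) (Set.Ioi 0)) (nhds 0) := by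
    have := (((continuous_id (X := ℝ)).smul (continuous_const (y := x))).tendsto (0:ℝ)).mono_left
      (nhdsWithin_le_nhds (s := Set.Ioi 0))
    convert this using 2 <;> simp
  have h2 : Filter.Tendsto (fun ε : ℝ => (c : ℝ) • (A x + ε • x)) (nhdsWithin (0:ℝ) (Set.Ioi 0))
      (nhds ((c : ℝ) • (A x + 0))) := (tendsto_const_nhds.add h1).const_smul _
  simp only [add_zero] at h2
  have hconv : ∀ ε : ℝ, ((c : ℝ) • (A + ε • 1)) x = (c : ℝ) • (A x + ε • x) := by
    intro ε
    simp [ContinuousLinearMap.smul_apply, ContinuousLinearMap.add_apply,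
      ContinuousLinearMap.one_apply]
  simp only [hconv, ContinuousLinearMap.smul_apply]
  exact h2

include hm in
lemma m_fst_le {A B : 𝔹} (hA : 0 ≤ A) (hB : 0 ≤ B) (hp0 : 0 < p) :
    (cNN p : ℝ) • A ≤ m A B := by
  refine le_of_strong_approx (f := fun ε => (cNN p : ℝ) • (A + ε • 1))
    (g := fun ε => m (A + ε • 1) (B + ε • 1)) (fun ε hε => ?_)
    (fun x => smul_shift_tendsto _ _ _) (fun x => hm.2 A B hA hB x)
  beta_reduce
  rw [m_eq_meanF hm (eps_shift_nonneg hA hε) (eps_shift_nonneg hB hε)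
    (eps_shift_isUnit hA hε) (eps_shift_isUnit hB hε)]
  exact meanF_fst_le hp0 (eps_shift_nonneg hA hε) (eps_shift_nonneg hB hε)
    (eps_shift_isUnit hA hε)

include hm in
lemma m_snd_le {A B : 𝔹} (hA : 0 ≤ A) (hB : 0 ≤ B) (hp0 : 0 < p) :
    (cNN p : ℝ) • B ≤ m A B := by
  refine le_of_strong_approx (f := fun ε => (cNN p : ℝ) • (B + ε • 1))
    (g := fun ε => m (A + ε • 1) (B + ε • 1)) (fun ε hε => ?_)
    (fun x => smul_shift_tendsto _ _ _) (fun x => hm.2 A B hA hB x)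
  beta_reduce
  rw [m_eq_meanF hm (eps_shift_nonneg hA hε) (eps_shift_nonneg hB hε)
    (eps_shift_isUnit hA hε) (eps_shift_isUnit hB hε)]
  exact meanF_snd_le hp0 (eps_shift_nonneg hA hε) (eps_shift_nonneg hB hε)
    (eps_shift_isUnit hA hε)

include hm in
lemma m_self_eq {A : 𝔹} (hA : 0 ≤ A) (hp0 : 0 < p) : m A A = A := by
  ext x
  have h1 := hm.2 A A hA hA x
  have h2 : Filter.Tendsto (fun ε : ℝ => (m (A + ε • 1) (A + ε • 1)) x)
      (nhdsWithin 0 (Set.Ioi 0)) (nhds (A x)) := by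
    have h3 : Filter.Tendsto (fun ε : ℝ => (A + ε • 1) x) (nhdsWithin (0:ℝ) (Set.Ioi 0))
        (nhds (A x)) := by
      have h4 : Filter.Tendsto (fun ε : ℝ => ε • x) (nhdsWithin (0:ℝ) (Set.Ioi 0)) (nhds 0) := by
        have := (((continuous_id (X := ℝ)).smul (continuous_const (y := x))).tendsto (0:ℝ)).mono_left
          (nhdsWithin_le_nhds (s := Set.Ioi 0))
        convert this using 2 <;> simp
      have h5 : Filter.Tendsto (fun ε : ℝ => A x + ε • x) (nhdsWithin (0:ℝ) (Set.Ioi 0))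
          (nhds (A x + 0)) := tendsto_const_nhds.add h4
      simp only [add_zero] at h5
      have hconv : ∀ ε : ℝ, (A + ε • 1) x = A x + ε • x := by
        intro ε
        simp [ContinuousLinearMap.add_apply, ContinuousLinearMap.smul_apply,
          ContinuousLinearMap.one_apply]
      simp only [hconv]
      exact h5
    refine h3.congr' ?_
    filter_upwards [eventually_mem_nhdsWithin] with ε hε
    rw [m_eq_meanF hm (eps_shift_nonneg hA hε) (eps_shift_nonneg hA hε)
      (eps_shift_isUnit hA hε) (eps_shift_isUnit hA hε),
      meanF_self hp0 (eps_shift_nonneg hA hε) (eps_shift_isUnit hA hε)]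
  exact tendsto_nhds_unique h1 h2
end Limits
section Mem
variable {p : ℝ} {m : (H →L[ℂ] H) → (H →L[ℂ] H) → (H →L[ℂ] H)}
variable (hm : IsKuboAndoPowerMean (H := H) p m)

lemma t34_coe : (((3:ℝ≥0)/4 : ℝ≥0) : ℝ) = 3/4 := by push_cast; norm_num

include hm in
lemma mem_self (hp0 : 0 < p) {A : 𝔹} (hA : 0 ≤ A) : A ∈ meanIterates m A := by
  refine ⟨[A], by simp, by simpa using hA, ?_⟩
  simp [m_self_eq hm hA hp0]

lemma mem_step {A D X : 𝔹} (hD : D ∈ meanIterates m A) (hX : 0 ≤ X) :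
    m D X ∈ meanIterates m A := by
  obtain ⟨l, hne, hpos, rfl⟩ := hD
  refine ⟨l ++ [X], by simp, ?_, ?_⟩
  · intro Y hY
    rcases List.mem_append.mp hY with h | h
    · exact hpos Y h
    · simp only [List.mem_singleton] at h
      exact h ▸ hX
  · rw [List.foldl_append]
    rfl

lemma mem_trans {A C D : 𝔹} (h1 : D ∈ meanIterates m C) (h2 : C ∈ meanIterates m A) :
    D ∈ meanIterates m A := by
  obtain ⟨l2, hne2, hpos2, rfl⟩ := h1
  obtain ⟨l1, hne1, hpos1, rfl⟩ := h2
  refine ⟨l1 ++ l2, by simp [hne1], ?_, ?_⟩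
  · intro Y hY
    rcases List.mem_append.mp hY with h | h
    · exact hpos1 Y h
    · exact hpos2 Y h
  · rw [List.foldl_append]

include hm in
lemma fold_nonneg_isUnit (hp0 : 0 < p) (l : List 𝔹) (hl : ∀ X ∈ l, 0 ≤ X) :
    ∀ C : 𝔹, 0 ≤ C → IsUnit C → 0 ≤ l.foldl m C ∧ IsUnit (l.foldl m C) := by
  induction l with
  | nil => exact fun C hC uC => ⟨hC, uC⟩
  | cons X l ih =>
    intro C hC uC
    have hX : 0 ≤ X := hl X List.mem_cons_self
    have h1 : 0 ≤ m C X := m_nonneg hm hC hX hp0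
    have h2 : IsUnit (m C X) := by
      refine CStarAlgebra.isUnit_of_le ((cNN p : ℝ) • C) (m_fst_le hm hC hX hp0)
        (IsUnit.isStrictlyPositive ?_ (nnsmul_nonneg _ hC))
      exact smul_isUnit (by exact_mod_cast (cNN_pos (p := p)).ne') uC
    exact ih (fun Y hY => hl Y (List.mem_cons_of_mem X hY)) (m C X) h1 h2

include hm in
lemma mem_iterates_nonneg_isUnit (hp0 : 0 < p) {B D : 𝔹} (hB : 0 ≤ B) (uB : IsUnit B)
    (hD : D ∈ meanIterates m B) : 0 ≤ D ∧ IsUnit D := by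
  obtain ⟨l, hne, hpos, rfl⟩ := hD
  exact fold_nonneg_isUnit hm hp0 l hpos B hB uB

include hm in
lemma mem_of_isUnit (hp0 : 0 < p) (hp1 : p ≤ 1) {C D : 𝔹} (hC : 0 ≤ C) (uC : IsUnit C)
    (hD : 0 ≤ D) (uD : IsUnit D) : D ∈ meanIterates m C := by
  obtain ⟨d, hd, hdle⟩ := exists_smul_one_le hD uD
  have hCn : C ≤ ((‖C‖₊ : ℝ≥0) : ℝ) • 1 := le_nnnorm_smul_one C (IsSelfAdjoint.of_nonneg hC)
  -- find n with (3/4)^n * ‖C‖₊ ≤ d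
  have hM : (0:ℝ) < ‖C‖ + 1 := by positivity
  obtain ⟨n, hn⟩ := exists_pow_lt_of_lt_one (div_pos (by exact_mod_cast hd) hM)
    (by norm_num : (3/4 : ℝ) < 1)
  have hkey : ((3:ℝ≥0)/4) ^ n * ‖C‖₊ ≤ d := by
    rw [← NNReal.coe_le_coe]
    push_cast
    calc (3/4:ℝ) ^ n * ‖C‖ ≤ (3/4:ℝ) ^ n * (‖C‖ + 1) := by
          apply mul_le_mul_of_nonneg_left (by linarith) (by positivity)
      _ ≤ d := by rw [← le_div_iff₀ hM]; exact hn.le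
  -- the shrinking chain
  have chain : ∀ k : ℕ, ((((3:ℝ≥0)/4) ^ k : ℝ≥0) : ℝ) • C ∈ meanIterates m C := by
    intro k
    induction k with
    | zero => simpa using mem_self hm hp0 hC
    | succ k ih =>
      have hPpos : 0 ≤ ((((3:ℝ≥0)/4) ^ k : ℝ≥0) : ℝ) • C := nnsmul_nonneg _ hC
      have hPunit : IsUnit (((((3:ℝ≥0)/4) ^ k : ℝ≥0) : ℝ) • C) :=
        smul_isUnit (by positivity) uC
      have heq : (((3:ℝ≥0)/4 : ℝ≥0) : ℝ) • (((((3:ℝ≥0)/4) ^ k : ℝ≥0) : ℝ) • C)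
          = ((((3:ℝ≥0)/4) ^ (k+1) : ℝ≥0) : ℝ) • C := by
        rw [smul_smul]
        congr 1
        push_cast
        ring
      obtain ⟨X, hX, uX, hmX⟩ := solv hp0 hp1 hPpos hPunit (le_of_eq heq)
      have := mem_step (m := m) ih hX
      rw [m_eq_meanF hm hPpos hX hPunit uX, hmX] at this
      exact this
  have hPpos : 0 ≤ ((((3:ℝ≥0)/4) ^ n : ℝ≥0) : ℝ) • C := nnsmul_nonneg _ hC
  have hPunit : IsUnit (((((3:ℝ≥0)/4) ^ n : ℝ≥0) : ℝ) • C) := smul_isUnit (by positivity) uC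
  have hle : (((3:ℝ≥0)/4 : ℝ≥0) : ℝ) • (((((3:ℝ≥0)/4) ^ n : ℝ≥0) : ℝ) • C) ≤ D := by
    rw [smul_smul, ← NNReal.coe_mul]
    calc ((((3:ℝ≥0)/4) * ((3:ℝ≥0)/4) ^ n : ℝ≥0) : ℝ) • C
        ≤ ((((3:ℝ≥0)/4) * ((3:ℝ≥0)/4) ^ n : ℝ≥0) : ℝ) • (((‖C‖₊ : ℝ≥0) : ℝ) • 1) :=
          nnsmul_le_nnsmul _ hCn
      _ = (((((3:ℝ≥0)/4) * ((3:ℝ≥0)/4) ^ n) * ‖C‖₊ : ℝ≥0) : ℝ) • 1 := by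
          rw [smul_smul, ← NNReal.coe_mul]
      _ ≤ (d : ℝ) • 1 := by
          apply nnsmul_one_le_nnsmul_one
          calc (((3:ℝ≥0)/4) * ((3:ℝ≥0)/4) ^ n) * ‖C‖₊
              ≤ (1 * ((3:ℝ≥0)/4) ^ n) * ‖C‖₊ := by
                gcongr
                rw [← NNReal.coe_le_coe, t34_coe]; norm_num
            _ = ((3:ℝ≥0)/4) ^ n * ‖C‖₊ := by rw [one_mul]
            _ ≤ d := hkey
      _ ≤ D := hdle
  obtain ⟨X, hX, uX, hmX⟩ := solv hp0 hp1 hPpos hPunit hle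
  have := mem_step (m := m) (chain n) hX
  rw [m_eq_meanF hm hPpos hX hPunit uX, hmX] at this
  exact this
end Mem


/-- For `0 < p ≤ 1`, a positive operator `B` is invertible iff `𝔍(B)` is
the minimum of the family `{𝔍(A) : A ∈ B(H)⁺}` ordered by inclusion, i.e. `𝔍(B) ⊆ 𝔍(A)`
for every positive operator `A`. -/
theorem isUnit_iff_meanIterates_minimum (p : ℝ) (hp0 : 0 < p) (hp1 : p ≤ 1)
    (m : (H →L[ℂ] H) → (H →L[ℂ] H) → (H →L[ℂ] H)) (hm : IsKuboAndoPowerMean p m)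
    (B : H →L[ℂ] H) (hB : 0 ≤ B) :
    IsUnit B ↔ ∀ A : H →L[ℂ] H, 0 ≤ A → meanIterates m B ⊆ meanIterates m A := by
  constructor
  · intro uB A hA D hD
    obtain ⟨hDpos, uD⟩ := mem_iterates_nonneg_isUnit hm hp0 hB uB hD
    have hA1mem : m A 1 ∈ meanIterates m A := ⟨[1], by simp, by simpa using one_nonneg, rfl⟩
    have hA1pos : 0 ≤ m A 1 := m_nonneg hm hA one_nonneg hp0
    have uA1 : IsUnit (m A 1) := by
      apply isUnit_of_smul_one_le (cNN_pos (p := p))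
      simpa using m_snd_le hm hA one_nonneg hp0
    exact mem_trans (mem_of_isUnit hm hp0 hp1 hA1pos uA1 hDpos uD) hA1mem
  · intro h
    have h1 := h 1 one_nonneg (mem_self hm hp0 hB)
    obtain ⟨l, hne, hpos, hEq⟩ := h1
    have := (fold_nonneg_isUnit hm hp0 l hpos 1 one_nonneg isUnit_one).2
    rwa [← hEq] at this
end

section
/- Let -1 ≤ p < 0 and let H be a complex Hilbert space. An operator A ∈ B(H)⁺ is an orthogonal projection (i.e. A² = A and A* = A) if and only if I 𝔪ₚ A = A, where I is the identity operator. -/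
open scoped NNReal

variable {H : Type*} [NormedAddCommGroup H] [InnerProductSpace ℂ H] [CompleteSpace H]

set_option maxHeartbeats 1000000
set_option synthInstance.maxHeartbeats 400000

section ScalarAux
open Real Filter

namespace KAScalar
variable {p : ℝ} (hp1 : p < 0)

/-- the scalar mean `m_p(1,t)` for `t > 0`. -/
noncomputable def phi (p t : ℝ) : ℝ := (2⁻¹ * (1 + t ^ p)) ^ p⁻¹

lemma two_inv_rpow (z : ℝ) : (2:ℝ)⁻¹ ^ z = 2 ^ (-z) := by
  rw [← Real.rpow_neg_one (2:ℝ), ← Real.rpow_mul (by norm_num : (0:ℝ) ≤ 2)]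
  ring_nf

include hp1

lemma hip : p⁻¹ ≤ 0 := inv_nonpos.2 hp1.le

lemma inner_pos {t : ℝ} (ht : 0 < t) : 0 < 2⁻¹ * (1 + t ^ p) := by
  have := rpow_pos_of_pos ht p
  positivity

lemma phi_pos {t : ℝ} (ht : 0 < t) : 0 < phi p t := rpow_pos_of_pos (inner_pos hp1 ht) _

omit hp1 in
lemma phi_one : phi p 1 = 1 := by
  have h : (2:ℝ)⁻¹ * (1 + 1 ^ p) = 1 := by rw [Real.one_rpow]; norm_num
  rw [phi, h, Real.one_rpow]

lemma phi_mono {t s : ℝ} (ht : 0 < t) (hts : t ≤ s) : phi p t ≤ phi p s := by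
  have hs : 0 < s := lt_of_lt_of_le ht hts
  have h1 : s ^ p ≤ t ^ p := rpow_le_rpow_of_nonpos ht hts hp1.le
  exact rpow_le_rpow_of_nonpos (inner_pos hp1 hs) (by linarith) (hip hp1)

lemma phi_le_max {t : ℝ} (ht : 0 < t) : phi p t ≤ max 1 t := by
  have hm : 0 < max 1 t := lt_of_lt_of_le one_pos (le_max_left _ _)
  have h1 : (max 1 t) ^ p ≤ 1 := by
    calc (max 1 t) ^ p ≤ 1 ^ p := rpow_le_rpow_of_nonpos one_pos (le_max_left _ _) hp1.le
    _ = 1 := one_rpow p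
  have h2 : (max 1 t) ^ p ≤ t ^ p := rpow_le_rpow_of_nonpos ht (le_max_right _ _) hp1.le
  have key : (max 1 t) ^ p ≤ 2⁻¹ * (1 + t ^ p) := by linarith
  have h5 : phi p t ≤ ((max 1 t) ^ p) ^ p⁻¹ :=
    rpow_le_rpow_of_nonpos (rpow_pos_of_pos hm p) key (hip hp1)
  calc phi p t ≤ ((max 1 t) ^ p) ^ p⁻¹ := h5
  _ = max 1 t := by
      rw [← rpow_mul hm.le, mul_inv_cancel₀ (ne_of_lt hp1), rpow_one]

lemma phi_le_lin {t : ℝ} (ht : 0 < t) : phi p t ≤ 2 ^ (-p⁻¹) * t := by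
  have h1 : 2⁻¹ * t ^ p ≤ 2⁻¹ * (1 + t ^ p) := by
    have := rpow_pos_of_pos ht p; nlinarith
  have h2 : 0 < 2⁻¹ * t ^ p := by have := rpow_pos_of_pos ht p; positivity
  calc phi p t ≤ (2⁻¹ * t ^ p) ^ p⁻¹ :=
        rpow_le_rpow_of_nonpos h2 h1 (hip hp1)
  _ = 2 ^ (-p⁻¹) * t := by
      rw [mul_rpow (by norm_num) (rpow_pos_of_pos ht p).le, ← rpow_mul ht.le,
        mul_inv_cancel₀ (ne_of_lt hp1), rpow_one, two_inv_rpow]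

lemma phi_fixed {t : ℝ} (ht : 0 < t) (h : phi p t = t) : t = 1 := by
  have hinner := inner_pos hp1 ht
  have h2 : 2⁻¹ * (1 + t ^ p) = t ^ p := by
    have := congrArg (fun x => x ^ p) h
    simpa [phi, ← rpow_mul hinner.le, inv_mul_cancel₀ (ne_of_lt hp1)] using this
  have h3 : t ^ p = 1 := by linarith
  rcases lt_trichotomy t 1 with hlt | heq | hgt
  · exfalso
    have : 1 < t ^ p := (one_lt_rpow_iff_of_pos ht).2 (Or.inr ⟨hlt, hp1⟩)
    linarith
  · exact heq
  · exfalso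
    have : t ^ p < 1 := (rpow_lt_one_iff ht.le).2 (by right; left; exact ⟨hgt, hp1⟩)
    linarith

lemma hasDerivAt_phi {t : ℝ} (ht : 0 < t) :
    HasDerivAt (phi p) (2⁻¹ * (2⁻¹ * (1 + t ^ p)) ^ (p⁻¹ - 1) * t ^ (p - 1)) t := by
  have hinner := inner_pos hp1 ht
  have h1 : HasDerivAt (fun s : ℝ => s ^ p) (p * t ^ (p - 1)) t :=
    Real.hasDerivAt_rpow_const (Or.inl ht.ne')
  have h2 : HasDerivAt (fun s : ℝ => 2⁻¹ * (1 + s ^ p)) (2⁻¹ * (p * t ^ (p - 1))) t :=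
    (h1.const_add 1).const_mul 2⁻¹
  have h3 : HasDerivAt (fun x : ℝ => x ^ p⁻¹)
      (p⁻¹ * (2⁻¹ * (1 + t ^ p)) ^ (p⁻¹ - 1)) (2⁻¹ * (1 + t ^ p)) :=
    Real.hasDerivAt_rpow_const (Or.inl hinner.ne')
  have h4 := h3.comp t h2
  refine HasDerivAt.congr_deriv h4 ?_
  have : p⁻¹ * (2⁻¹ * (1 + t ^ p)) ^ (p⁻¹ - 1) * (2⁻¹ * (p * t ^ (p - 1)))
      = (p⁻¹ * p) * (2⁻¹ * (2⁻¹ * (1 + t ^ p)) ^ (p⁻¹ - 1) * t ^ (p - 1)) := by ring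
  rw [this, inv_mul_cancel₀ (ne_of_lt hp1), one_mul]

lemma deriv_phi_le {t : ℝ} (ht : 0 < t) :
    2⁻¹ * (2⁻¹ * (1 + t ^ p)) ^ (p⁻¹ - 1) * t ^ (p - 1) ≤ 2 ^ (-p⁻¹) := by
  have hinner := inner_pos hp1 ht
  have htp := rpow_pos_of_pos ht p
  have hexp : p⁻¹ - 1 ≤ 0 := by have := hip hp1; linarith
  have h1 : (2⁻¹ * (1 + t ^ p)) ^ (p⁻¹ - 1) ≤ (2⁻¹ * t ^ p) ^ (p⁻¹ - 1) :=
    rpow_le_rpow_of_nonpos (by positivity) (by nlinarith) hexp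
  have h2 : (2⁻¹ * t ^ p) ^ (p⁻¹ - 1) = (2:ℝ)⁻¹ ^ (p⁻¹ - 1) * t ^ (p * (p⁻¹ - 1)) := by
    rw [mul_rpow (by norm_num) htp.le, ← rpow_mul ht.le]
  have h3 : t ^ (p * (p⁻¹ - 1)) * t ^ (p - 1) = 1 := by
    rw [← rpow_add ht]
    have he : p * (p⁻¹ - 1) + (p - 1) = 0 := by
      rw [mul_sub, mul_inv_cancel₀ (ne_of_lt hp1)]; ring
    rw [he, rpow_zero]
  have h4 : (2:ℝ)⁻¹ ^ (p⁻¹ - 1) = 2 ^ (1 - p⁻¹) := by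
    rw [two_inv_rpow]; ring_nf
  have htp1 : (0:ℝ) < t ^ (p - 1) := rpow_pos_of_pos ht _
  calc 2⁻¹ * (2⁻¹ * (1 + t ^ p)) ^ (p⁻¹ - 1) * t ^ (p - 1)
      ≤ 2⁻¹ * ((2⁻¹ * t ^ p) ^ (p⁻¹ - 1)) * t ^ (p - 1) := by nlinarith
  _ = 2⁻¹ * (2 ^ (1 - p⁻¹)) * (t ^ (p * (p⁻¹ - 1)) * t ^ (p - 1)) := by rw [h2, h4]; ring
  _ = 2⁻¹ * 2 ^ (1 - p⁻¹) := by rw [h3, mul_one]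
  _ = 2 ^ (-p⁻¹) := by
      rw [← rpow_neg_one (2:ℝ), ← rpow_add (by norm_num : (0:ℝ) < 2)]
      rw [show (-1:ℝ) + (1 - p⁻¹) = -p⁻¹ by ring]

lemma phi_shift {t e : ℝ} (ht : 0 < t) (he : 0 < e) :
    phi p (t + e) ≤ phi p t + 2 ^ (-p⁻¹) * e := by
  set L : ℝ := 2 ^ (-p⁻¹) with hL
  have key : AntitoneOn (fun s => phi p s - L * s) (Set.Icc t (t + e)) := by
    apply antitoneOn_of_deriv_nonpos (convex_Icc _ _)
    · apply ContinuousOn.sub _ (by fun_prop)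
      intro s hs
      exact ((hasDerivAt_phi hp1 (lt_of_lt_of_le ht hs.1)).continuousAt).continuousWithinAt
    · intro s hs
      rw [interior_Icc] at hs
      have hs0 : 0 < s := lt_trans ht hs.1
      have hd : HasDerivAt (fun s => phi p s - L * s)
          (2⁻¹ * (2⁻¹ * (1 + s ^ p)) ^ (p⁻¹ - 1) * s ^ (p - 1) - L * 1) s :=
        (hasDerivAt_phi hp1 hs0).sub ((hasDerivAt_id s).const_mul L)
      exact hd.differentiableAt.differentiableWithinAt
    · intro s hs
      rw [interior_Icc] at hs
      have hs0 : 0 < s := lt_trans ht hs.1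
      have hd : HasDerivAt (fun s => phi p s - L * s)
          (2⁻¹ * (2⁻¹ * (1 + s ^ p)) ^ (p⁻¹ - 1) * s ^ (p - 1) - L * 1) s :=
        (hasDerivAt_phi hp1 hs0).sub ((hasDerivAt_id s).const_mul L)
      rw [hd.deriv]
      have := deriv_phi_le hp1 hs0
      rw [hL]
      simp only [mul_one]
      linarith
  have := key (Set.left_mem_Icc.2 (by linarith)) (Set.right_mem_Icc.2 (by linarith)) (by linarith)
  simp only at this
  linarith

end KAScalar
open Real Filter KAScalar
namespace KAScalar
variable {p : ℝ} (hp1 : p < 0)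

/-- regularized mean `m_p(1+ε, t+ε)`. -/
noncomputable def Feps (p e t : ℝ) : ℝ := (2⁻¹ * ((1 + e) ^ p + (t + e) ^ p)) ^ p⁻¹

/-- limit function: `m_p(1,t)` extended by `0` at `0`. -/
noncomputable def G (p t : ℝ) : ℝ := if t = 0 then 0 else phi p t

lemma G_zero : G p 0 = 0 := by simp [G]
lemma G_one : G p 1 = 1 := by simp [G, phi_one]

include hp1

lemma scaling {c s : ℝ} (hc : 0 < c) (hs : 0 < s) :
    (2⁻¹ * (c ^ p + s ^ p)) ^ p⁻¹ = c * phi p (s / c) := by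
  have hcp := rpow_pos_of_pos hc p
  have h1 : c ^ p + s ^ p = c ^ p * (1 + (s / c) ^ p) := by
    rw [div_rpow hs.le hc.le, mul_add, mul_one, mul_div_cancel₀ _ (ne_of_gt hcp)]
  rw [h1, phi, show (2:ℝ)⁻¹ * (c ^ p * (1 + (s / c) ^ p))
      = c ^ p * (2⁻¹ * (1 + (s / c) ^ p)) by ring,
    mul_rpow hcp.le (inner_pos hp1 (by positivity)).le,
    ← rpow_mul hc.le, mul_inv_cancel₀ (ne_of_lt hp1), rpow_one]

lemma Feps_eq {e t : ℝ} (he : 0 < e) (ht : 0 ≤ t) :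
    Feps p e t = (1 + e) * phi p ((t + e) / (1 + e)) :=
  scaling hp1 (by linarith) (by linarith)

lemma G_le_Feps {e t : ℝ} (he : 0 < e) (ht : 0 ≤ t) : G p t ≤ Feps p e t := by
  rcases eq_or_lt_of_le ht with h0 | h0
  · rw [G, if_pos h0.symm, Feps]
    have h1 : (0:ℝ) < 1 + e := by linarith
    have h2 : (0:ℝ) < t + e := by linarith
    positivity
  · rw [G, if_neg (ne_of_gt h0), Feps, phi]
    have h1 : (1 + e) ^ p ≤ 1 := by
      calc (1 + e) ^ p ≤ 1 ^ p := rpow_le_rpow_of_nonpos one_pos (by linarith) hp1.le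
      _ = 1 := one_rpow p
    have h2 : (t + e) ^ p ≤ t ^ p := rpow_le_rpow_of_nonpos h0 (by linarith) hp1.le
    exact rpow_le_rpow_of_nonpos (by positivity) (by linarith) (hip hp1)

lemma Feps_le {e t M : ℝ} (he : 0 < e) (he1 : e ≤ 1) (ht : 0 ≤ t) (hM : t ≤ M) :
    Feps p e t ≤ G p t + (max 1 (M + 1) + 2 ^ (-p⁻¹)) * e := by
  have hte : 0 < t + e := by linarith
  have h1e : (0:ℝ) < 1 + e := by linarith
  have hdiv : (t + e) / (1 + e) ≤ t + e := by
    rw [div_le_iff₀ h1e]; nlinarith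
  have hdiv0 : 0 < (t + e) / (1 + e) := by positivity
  have step1 : Feps p e t ≤ (1 + e) * phi p (t + e) := by
    rw [Feps_eq hp1 he ht]
    have := phi_mono hp1 hdiv0 hdiv
    nlinarith [phi_pos hp1 hdiv0]
  have hmax : phi p (t + e) ≤ max 1 (M + 1) := by
    refine (phi_le_max hp1 hte).trans ?_
    apply max_le_max le_rfl; linarith
  have step2 : (1 + e) * phi p (t + e) ≤ phi p (t + e) + max 1 (M + 1) * e := by
    have hphi0 : 0 < phi p (t + e) := phi_pos hp1 hte
    nlinarith
  have step3 : phi p (t + e) ≤ G p t + 2 ^ (-p⁻¹) * e := by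
    rcases eq_or_lt_of_le ht with h0 | h0
    · rw [G, if_pos h0.symm, ← h0, zero_add]
      simpa using phi_le_lin hp1 he
    · rw [G, if_neg (ne_of_gt h0)]
      exact phi_shift hp1 h0 he
  calc Feps p e t ≤ (1 + e) * phi p (t + e) := step1
  _ ≤ phi p (t + e) + max 1 (M + 1) * e := step2
  _ ≤ G p t + 2 ^ (-p⁻¹) * e + max 1 (M + 1) * e := by linarith
  _ = G p t + (max 1 (M + 1) + 2 ^ (-p⁻¹)) * e := by ring

lemma G_fixed {t : ℝ} (ht : 0 ≤ t) (h : G p t = t) : t = 0 ∨ t = 1 := by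
  rcases eq_or_lt_of_le ht with h0 | h0
  · exact Or.inl h0.symm
  · right
    rw [G, if_neg (ne_of_gt h0)] at h
    exact phi_fixed hp1 h0 h

lemma tendsto_phi_zero : Tendsto (phi p) (nhdsWithin 0 (Set.Ioi 0)) (nhds 0) := by
  have h1 : Tendsto (fun t : ℝ => t ^ p) (nhdsWithin 0 (Set.Ioi 0)) atTop := by
    have hneg : 0 < -p := by linarith
    have := (tendsto_rpow_atTop hneg).comp tendsto_inv_nhdsGT_zero
    apply this.congr'
    filter_upwards [self_mem_nhdsWithin] with t (ht : 0 < t)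
    simp only [Function.comp]
    rw [← Real.rpow_neg_one t, ← Real.rpow_mul ht.le, neg_one_mul, neg_neg]
  have h2 : Tendsto (fun t : ℝ => 2⁻¹ * (1 + t ^ p)) (nhdsWithin 0 (Set.Ioi 0)) atTop := by
    apply Tendsto.const_mul_atTop (by norm_num : (0:ℝ) < 2⁻¹)
    exact tendsto_atTop_add_const_left _ 1 h1
  have h3 : Tendsto (fun x : ℝ => x ^ p⁻¹) atTop (nhds 0) := by
    have : 0 < -p⁻¹ := by simpa using inv_neg''.mpr hp1
    simpa using tendsto_rpow_neg_atTop this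
  exact h3.comp h2

lemma continuousOn_G : ContinuousOn (G p) (Set.Ici 0) := by
  intro x hx
  rcases eq_or_lt_of_le (Set.mem_Ici.mp hx) with h0 | h0
  · -- at 0
    rw [ContinuousWithinAt, ← h0, G_zero]
    have : nhdsWithin (0:ℝ) (Set.Ici 0) = nhdsWithin 0 {0} ⊔ nhdsWithin 0 (Set.Ioi 0) := by
      rw [← nhdsWithin_union]
      congr 1
      ext y; simp [le_iff_lt_or_eq, or_comm, eq_comm]
    rw [this, tendsto_sup]
    constructor
    · rw [nhdsWithin_singleton]
      have h := tendsto_pure_nhds (G p) 0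
      rwa [G_zero] at h
    · apply (tendsto_phi_zero hp1).congr'
      filter_upwards [self_mem_nhdsWithin] with t (ht : 0 < t)
      rw [G, if_neg (ne_of_gt ht)]
  · -- at x > 0
    apply ContinuousAt.continuousWithinAt
    apply ((hasDerivAt_phi hp1 h0).continuousAt).congr
    filter_upwards [eventually_ne_nhds (ne_of_gt h0)] with y hy
    rw [G, if_neg hy]

lemma continuousOn_Feps {e : ℝ} (he : 0 < e) : ContinuousOn (Feps p e) (Set.Ici 0) := by
  intro x hx
  apply ContinuousAt.continuousWithinAt
  have hxe : (0:ℝ) < x + e := by have : (0:ℝ) ≤ x := hx; linarith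
  have hb : ContinuousAt (fun t : ℝ => (t + e) ^ p) x :=
    ContinuousAt.comp (g := fun y : ℝ => y ^ p) (f := fun t : ℝ => t + e)
      (Real.continuousAt_rpow_const _ p (Or.inl (ne_of_gt hxe))) (by fun_prop)
  have hin : ContinuousAt (fun t : ℝ => 2⁻¹ * ((1 + e) ^ p + (t + e) ^ p)) x :=
    continuousAt_const.mul (continuousAt_const.add hb)
  have hval : (0:ℝ) < 2⁻¹ * ((1 + e) ^ p + (x + e) ^ p) := by
    have h1 : (0:ℝ) < (1+e) ^ p := rpow_pos_of_pos (by linarith) p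
    have h2 : (0:ℝ) < (x+e) ^ p := rpow_pos_of_pos hxe p
    positivity
  exact ContinuousAt.comp (g := fun y : ℝ => y ^ p⁻¹)
    (Real.continuousAt_rpow_const _ p⁻¹ (Or.inl (ne_of_gt hval))) hin

end KAScalar

end ScalarAux

section OpsAux
open Real Filter KAScalar

lemma scalar_conj (c : ℝ≥0) (X : H →L[ℂ] H) :
    algebraMap ℝ≥0 (H →L[ℂ] H) c * X * algebraMap ℝ≥0 (H →L[ℂ] H) c = ((c * c : ℝ≥0) : ℝ) • X := by
  rw [Algebra.algebraMap_eq_smul_one, NNReal.smul_def, smul_mul_assoc, one_mul, mul_smul_comm,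
    mul_one, smul_smul, NNReal.coe_mul]

lemma op_formula (p : ℝ) (hp1 : p < 0)
    (m : (H →L[ℂ] H) → (H →L[ℂ] H) → (H →L[ℂ] H)) (hm : IsKuboAndoPowerMean p m)
    (A : H →L[ℂ] H) (hA : 0 ≤ A) {ε : ℝ} (hε : 0 < ε) :
    m (1 + ε • 1) (A + ε • 1)
      = cfc (fun t : ℝ≥0 =>
          (2⁻¹ * ((1 + ε.toNNReal) ^ p + (t + ε.toNNReal) ^ p)) ^ p⁻¹) A := by
  set e : ℝ≥0 := ε.toNNReal with hedef
  have he : (e : ℝ) = ε := Real.coe_toNNReal _ hε.le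
  set c : ℝ≥0 := 1 + e with hcdef
  have hc : c ≠ 0 := by positivity
  have he0 : e ≠ 0 := by
    simp only [hedef, ne_eq, Real.toNNReal_eq_zero, not_le]; exact hε
  -- the operators
  have hU : (1 : H →L[ℂ] H) + ε • 1 = algebraMap ℝ≥0 (H →L[ℂ] H) c := by
    rw [hcdef, map_add, map_one, Algebra.algebraMap_eq_smul_one, NNReal.smul_def, he]
  have hUnn : (0:H →L[ℂ] H) ≤ 1 + ε • 1 :=
    add_nonneg zero_le_one (smul_nonneg hε.le zero_le_one)
  have hBnn : (0:H →L[ℂ] H) ≤ A + ε • 1 :=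
    add_nonneg hA (smul_nonneg hε.le zero_le_one)
  have hUu : IsUnit ((1 : H →L[ℂ] H) + ε • 1) := by
    rw [hU]; exact (isUnit_iff_ne_zero.mpr hc).map (algebraMap ℝ≥0 (H →L[ℂ] H))
  have hBu : IsUnit (A + ε • 1) := by
    rw [← spectrum.zero_notMem_iff ℝ]
    intro h0
    have h1 : A + ε • 1 = algebraMap ℝ (H →L[ℂ] H) ε + A := by
      rw [Algebra.algebraMap_eq_smul_one, add_comm]
    rw [h1, show (0:ℝ) = -ε + ε by ring, spectrum.add_mem_add_iff] at h0
    have := spectrum_nonneg_of_nonneg hA h0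
    linarith
  -- rpow of the scalar operator
  have hUr : ∀ r : ℝ, ((1 : H →L[ℂ] H) + ε • 1) ^ r = algebraMap ℝ≥0 (H →L[ℂ] H) (c ^ r) := by
    intro r; rw [hU, CFC.rpow_algebraMap]
  -- B as cfc
  have hB : A + ε • 1 = cfc (fun t : ℝ≥0 => t + e) A := by
    rw [cfc_add .., cfc_id' ℝ≥0 A, cfc_const e A, Algebra.algebraMap_eq_smul_one,
      NNReal.smul_def, he]
  -- middle term
  have hcc : c ^ (-(2:ℝ)⁻¹) * c ^ (-(2:ℝ)⁻¹) = c⁻¹ := by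
    rw [← NNReal.rpow_add hc, show -(2:ℝ)⁻¹ + -(2:ℝ)⁻¹ = -1 by norm_num, NNReal.rpow_neg,
      NNReal.rpow_one]
  have hM : ((1 : H →L[ℂ] H) + ε • 1) ^ (-(2:ℝ)⁻¹) * (A + ε • 1) *
        ((1 : H →L[ℂ] H) + ε • 1) ^ (-(2:ℝ)⁻¹)
      = cfc (fun t : ℝ≥0 => c⁻¹ * (t + e)) A := by
    rw [hUr, scalar_conj, hcc, hB, ← NNReal.smul_def, ← cfc_smul c⁻¹ _ A]
    simp [smul_eq_mul]
  -- rpow of a cfc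
  have hcfc_rpow : ∀ (f : ℝ≥0 → ℝ≥0), ContinuousOn f (spectrum ℝ≥0 A) →
      (∀ t ∈ spectrum ℝ≥0 A, f t ≠ 0) → ∀ r : ℝ,
      (cfc f A) ^ r = cfc (fun t : ℝ≥0 => (f t) ^ r) A := by
    intro f hf hf0 r
    have hg : ContinuousOn (fun x : ℝ≥0 => x ^ r) (f '' spectrum ℝ≥0 A) := by
      apply NNReal.continuousOn_rpow_const_compl_zero.mono
      rintro x ⟨t, ht, rfl⟩
      exact hf0 t ht
    rw [CFC.rpow_def, ← cfc_comp (g := fun x : ℝ≥0 => x ^ r) (f := f) (a := A)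
      (ha := hA) (hg := hg) (hf := hf)]
    rfl
  -- the two smul steps
  have hsmul : ∀ (f : ℝ≥0 → ℝ≥0) (d : ℝ≥0), ContinuousOn f (spectrum ℝ≥0 A) →
      ((d : ℝ)) • cfc f A = cfc (fun t : ℝ≥0 => d * f t) A := by
    intro f d hf
    rw [← NNReal.smul_def, ← cfc_smul d f A hf]
    simp [smul_eq_mul]
  have hone : ∀ (f : ℝ≥0 → ℝ≥0), ContinuousOn f (spectrum ℝ≥0 A) →
      1 + cfc f A = cfc (fun t : ℝ≥0 => 1 + f t) A := by
    intro f hf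
    rw [cfc_add A (fun _ => (1:ℝ≥0)) f (by fun_prop) hf, cfc_const 1 A, map_one]
  have hconta : ContinuousOn (fun t : ℝ≥0 => c⁻¹ * (t + e)) (spectrum ℝ≥0 A) := by fun_prop
  have hMp : (cfc (fun t : ℝ≥0 => c⁻¹ * (t + e)) A) ^ p
      = cfc (fun t : ℝ≥0 => (c⁻¹ * (t + e)) ^ p) A := by
    apply hcfc_rpow _ hconta
    intro t _
    positivity
  have hcontb : ContinuousOn (fun t : ℝ≥0 => (c⁻¹ * (t + e)) ^ p) (spectrum ℝ≥0 A) := by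
    apply ContinuousOn.comp (t := {0}ᶜ) NNReal.continuousOn_rpow_const_compl_zero hconta
    intro t _
    have : c⁻¹ * (t + e) ≠ 0 := by positivity
    simpa using this
  have hcontc : ContinuousOn (fun t : ℝ≥0 => 2⁻¹ * (1 + (c⁻¹ * (t + e)) ^ p))
      (spectrum ℝ≥0 A) := continuousOn_const.mul (continuousOn_const.add hcontb)
  have hcontd : ContinuousOn (fun t : ℝ≥0 => (2⁻¹ * (1 + (c⁻¹ * (t + e)) ^ p)) ^ p⁻¹)
      (spectrum ℝ≥0 A) := by
    apply ContinuousOn.comp (t := {0}ᶜ) NNReal.continuousOn_rpow_const_compl_zero hcontc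
    intro t _
    have : (2:ℝ≥0)⁻¹ * (1 + (c⁻¹ * (t + e)) ^ p) ≠ 0 := by positivity
    simpa using this
  have hcc2 : c ^ ((2:ℝ)⁻¹) * c ^ ((2:ℝ)⁻¹) = c := by
    rw [← NNReal.rpow_add hc, show (2:ℝ)⁻¹ + (2:ℝ)⁻¹ = 1 by norm_num, NNReal.rpow_one]
  have hcp : (0:ℝ≥0) < c ^ p := NNReal.rpow_pos (by positivity)
  have key : ∀ t : ℝ≥0, c * (2⁻¹ * (1 + (c⁻¹ * (t + e)) ^ p)) ^ p⁻¹
      = (2⁻¹ * (c ^ p + (t + e) ^ p)) ^ p⁻¹ := by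
    intro t
    have h1 : (c⁻¹ * (t + e)) ^ p = (c ^ p)⁻¹ * (t + e) ^ p := by
      rw [NNReal.mul_rpow, NNReal.inv_rpow]
    have h2 : (2:ℝ≥0)⁻¹ * (1 + (c ^ p)⁻¹ * (t + e) ^ p)
        = (c ^ p)⁻¹ * (2⁻¹ * (c ^ p + (t + e) ^ p)) := by
      have h2' : (c ^ p)⁻¹ * (c ^ p + (t + e) ^ p) = 1 + (c ^ p)⁻¹ * (t + e) ^ p := by
        rw [mul_add, inv_mul_cancel₀ (ne_of_gt hcp)]
      rw [← h2']; ring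
    rw [h1, h2, NNReal.mul_rpow, NNReal.inv_rpow, ← NNReal.rpow_mul,
      mul_inv_cancel₀ (ne_of_lt hp1), NNReal.rpow_one, ← mul_assoc,
      mul_inv_cancel₀ hc, one_mul]
  have hsmulhalf : ∀ (f : ℝ≥0 → ℝ≥0), ContinuousOn f (spectrum ℝ≥0 A) →
      (2:ℝ)⁻¹ • cfc f A = cfc (fun t => 2⁻¹ * f t) A := by
    intro f hf
    rw [show (2:ℝ)⁻¹ = (((2:ℝ≥0)⁻¹ : ℝ≥0) : ℝ) by norm_num, hsmul _ _ hf]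
  rw [hm.1 _ _ hUnn hBnn hUu hBu, hM, hMp, hone _ hcontb,
    hsmulhalf (fun t => 1 + (c⁻¹ * (t + e)) ^ p) (continuousOn_const.add hcontb),
    hcfc_rpow _ hcontc (fun t _ => by positivity) p⁻¹,
    hUr ((2:ℝ)⁻¹), scalar_conj, hcc2, hsmul _ _ hcontd]
  exact cfc_congr (fun t _ => key t)



lemma op_formula_real (p : ℝ) (hp1 : p < 0)
    (m : (H →L[ℂ] H) → (H →L[ℂ] H) → (H →L[ℂ] H)) (hm : IsKuboAndoPowerMean p m)
    (A : H →L[ℂ] H) (hA : 0 ≤ A) {ε : ℝ} (hε : 0 < ε) :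
    m (1 + ε • 1) (A + ε • 1) = cfc (Feps p ε) A := by
  rw [op_formula p hp1 m hm A hA hε, cfc_nnreal_eq_real _ _ hA]
  apply cfc_congr
  intro x hx
  have hx0 : 0 ≤ x := spectrum_nonneg_of_nonneg hA hx
  have he : (ε.toNNReal : ℝ) = ε := Real.coe_toNNReal _ hε.le
  have hxc : (x.toNNReal : ℝ) = x := Real.coe_toNNReal _ hx0
  simp only [Feps, NNReal.coe_rpow, NNReal.coe_mul, NNReal.coe_add, NNReal.coe_inv,
    NNReal.coe_one, NNReal.coe_ofNat, he, hxc]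

lemma op_m_one [Nontrivial H] (p : ℝ) (hp1 : p < 0)
    (m : (H →L[ℂ] H) → (H →L[ℂ] H) → (H →L[ℂ] H)) (hm : IsKuboAndoPowerMean p m)
    (A : H →L[ℂ] H) (hA : 0 ≤ A) :
    m 1 A = cfc (G p) A := by
  have hσ : spectrum ℝ A ⊆ Set.Ici 0 := fun x hx => spectrum_nonneg_of_nonneg hA hx
  have contG : ContinuousOn (G p) (spectrum ℝ A) := (continuousOn_G hp1).mono hσ
  set C : ℝ := max 1 (‖A‖ + 1) + 2 ^ (-p⁻¹) with hC
  have hC0 : 0 ≤ C := by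
    show (0:ℝ) ≤ max 1 (‖A‖ + 1) + 2 ^ (-p⁻¹)
    have h1 : (0:ℝ) ≤ 2 ^ (-p⁻¹) := Real.rpow_nonneg (by norm_num) _
    have h2 : (1:ℝ) ≤ max 1 (‖A‖ + 1) := le_max_left _ _
    linarith
  have hbound : ∀ ε : ℝ, 0 < ε → ε ≤ 1 → ‖cfc (Feps p ε) A - cfc (G p) A‖ ≤ C * ε := by
    intro ε hε hε1
    have contF : ContinuousOn (Feps p ε) (spectrum ℝ A) :=
      (continuousOn_Feps (p := p) hp1 hε).mono hσ
    rw [← cfc_sub (Feps p ε) (G p) A contF contG]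
    apply norm_cfc_le (by positivity)
    intro x hx
    have hx0 : 0 ≤ x := spectrum_nonneg_of_nonneg hA hx
    have hxM : x ≤ ‖A‖ := by
      have := spectrum.norm_le_norm_of_mem hx
      rwa [Real.norm_of_nonneg hx0] at this
    have hlow := G_le_Feps hp1 hε hx0
    have hupp := Feps_le hp1 hε hε1 hx0 hxM
    have hupp' : Feps p ε x ≤ G p x + C * ε := by rw [hC]; exact hupp
    rw [Real.norm_eq_abs, abs_sub_le_iff]
    constructor
    · linarith
    · nlinarith
  have htend : ∀ x : H, Filter.Tendsto (fun ε : ℝ => (m (1 + ε • 1) (A + ε • 1)) x)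
      (nhdsWithin 0 (Set.Ioi 0)) (nhds ((cfc (G p) A) x)) := by
    intro x
    rw [← tendsto_sub_nhds_zero_iff]
    have hg : Filter.Tendsto (fun ε : ℝ => (C * ε) * ‖x‖)
        (nhdsWithin 0 (Set.Ioi 0)) (nhds 0) := by
      have h1 : Filter.Tendsto (fun ε : ℝ => (C * ε) * ‖x‖) (nhds 0) (nhds ((C * 0) * ‖x‖)) :=
        Continuous.tendsto (by fun_prop) 0
      simpa using h1.mono_left nhdsWithin_le_nhds
    refine squeeze_zero_norm' ?_ hg
    filter_upwards [Ioo_mem_nhdsGT_of_mem (Set.mem_Ico.mpr ⟨le_refl (0:ℝ), zero_lt_one⟩)]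
      with ε hε
    obtain ⟨hε0, hε1⟩ := hε
    rw [op_formula_real p hp1 m hm A hA hε0, ← ContinuousLinearMap.sub_apply]
    calc ‖(cfc (Feps p ε) A - cfc (G p) A) x‖
        ≤ ‖cfc (Feps p ε) A - cfc (G p) A‖ * ‖x‖ := ContinuousLinearMap.le_opNorm _ x
    _ ≤ (C * ε) * ‖x‖ :=
        mul_le_mul_of_nonneg_right (hbound ε hε0 hε1.le) (norm_nonneg x)
  ext x
  exact tendsto_nhds_unique (hm.2 1 A zero_le_one hA x) (htend x)

end OpsAux

/-- For `-1 ≤ p < 0`, a positive operator `A` is an orthogonal projection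
iff `I 𝔪ₚ A = A`. -/
theorem isProjection_iff_kuboAndo_one (p : ℝ) (hp0 : -1 ≤ p) (hp1 : p < 0)
    (m : (H →L[ℂ] H) → (H →L[ℂ] H) → (H →L[ℂ] H)) (hm : IsKuboAndoPowerMean p m)
    (A : H →L[ℂ] H) (hA : 0 ≤ A) :
    (A * A = A ∧ star A = A) ↔ m 1 A = A := by
  rcases subsingleton_or_nontrivial H with hH | hH
  · have hss : ∀ X Y : H →L[ℂ] H, X = Y := fun X Y =>
      ContinuousLinearMap.ext fun x => Subsingleton.elim _ _
    exact ⟨fun _ => hss _ _, fun _ => ⟨hss _ _, hss _ _⟩⟩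
  have hsa : IsSelfAdjoint A := IsSelfAdjoint.of_nonneg hA
  have hσ : spectrum ℝ A ⊆ Set.Ici 0 := fun x hx => spectrum_nonneg_of_nonneg hA hx
  have contG : ContinuousOn (KAScalar.G p) (spectrum ℝ A) :=
    (KAScalar.continuousOn_G hp1).mono hσ
  have m1A := op_m_one p hp1 m hm A hA
  constructor
  · rintro ⟨hA2, -⟩
    have hmul : cfc (fun x : ℝ => x * x) A = cfc (fun x : ℝ => x) A := by
      rw [cfc_mul .., cfc_id' ℝ A, hA2]
    have heq := eqOn_of_cfc_eq_cfc hmul (by fun_prop) (by fun_prop) hsa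
    have hspec : ∀ t ∈ spectrum ℝ A, t = 0 ∨ t = 1 := by
      intro t ht
      have h1 : t * t = t := heq ht
      have h2 : t * (t - 1) = 0 := by nlinarith
      rcases mul_eq_zero.mp h2 with h | h
      · exact Or.inl h
      · exact Or.inr (by linarith)
    rw [m1A]
    conv_rhs => rw [← cfc_id' ℝ A]
    apply cfc_congr
    intro t ht
    rcases hspec t ht with h | h <;> subst h
    · exact KAScalar.G_zero
    · exact KAScalar.G_one
  · intro h
    refine ⟨?_, hsa.star_eq⟩
    have hGid : cfc (KAScalar.G p) A = cfc (fun x : ℝ => x) A := by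
      rw [cfc_id' ℝ A, ← m1A, h]
    have heq := eqOn_of_cfc_eq_cfc hGid contG (by fun_prop) hsa
    have hspec : ∀ t ∈ spectrum ℝ A, t = 0 ∨ t = 1 := by
      intro t ht
      exact KAScalar.G_fixed hp1 (hσ ht) (heq ht)
    calc A * A = cfc (fun x : ℝ => x) A * cfc (fun x : ℝ => x) A := by rw [cfc_id' ℝ A]
    _ = cfc (fun x : ℝ => x * x) A := (cfc_mul ..).symm
    _ = cfc (fun x : ℝ => x) A := by
        apply cfc_congr
        intro t ht
        rcases hspec t ht with h | h <;> simp [h]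
    _ = A := cfc_id' ℝ A
end
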